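/- arXiv:2301.11657 — 8 statements merged into one kernel-verified Lean document; each statement's English description precedes it below -/
import Mathlib

section
/- Let N be even, let σ ∈ {−1,+1}^N satisfy Σ_i σ_i = 0, let W be a symmetric real N×N matrix with zero diagonal, and let s ∈ {−1,+1}. Suppose there exist a diagonal matrix D ∈ ℝ^{N×N} and ν ∈ ℝ such that the matrix S := D + ν·11ᵀ − sW is positive semidefinite, its second smallest eigenvalue λ_{N−1}(S) is strictly positive, and Sσ = 0. Then X* = σσᵀ is the unique optimal solution of the semidefinite program: maximize Σ_{i<j} s·W_{ij}·X_{ij} over symmetric positive semidefinite N×N matrices X with X_{ii} = 1 for all i and Σ_{i,j} X_{ij} = 0; that is, every feasible X satisfies Σ_{i<j} s·W_{ij}·X_{ij} ≤ Σ_{i<j} s·W_{ij}·σ_iσ_j, with equality if and only if X = σσᵀ. -/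
open Matrix Finset

lemma double_pair {N : ℕ} (f : Fin N → Fin N → ℝ)
    (hsymm : ∀ i j, f i j = f j i) (hdiag : ∀ i, f i i = 0) :
    2 * ∑ p ∈ Finset.univ.filter (fun p : Fin N × Fin N => p.1 < p.2), f p.1 p.2
      = ∑ i, ∑ j, f i j := by
  classical
  have h0 : ∑ p : Fin N × Fin N, f p.1 p.2 = ∑ i, ∑ j, f i j := by
    rw [Fintype.sum_prod_type]
  have hswap : ∑ p ∈ Finset.univ.filter (fun p : Fin N × Fin N => p.1 < p.2), f p.1 p.2
      = ∑ p ∈ Finset.univ.filter (fun p : Fin N × Fin N => p.2 < p.1), f p.1 p.2 := by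
    rw [Finset.sum_equiv (Equiv.prodComm (Fin N) (Fin N))
      (t := Finset.univ.filter (fun p : Fin N × Fin N => p.2 < p.1))
      (g := fun p => f p.2 p.1)]
    · exact Finset.sum_congr rfl fun p _ => hsymm p.2 p.1
    · intro p; simp [Equiv.prodComm]
    · intro p _; rfl
  have hsub : ∑ p ∈ Finset.univ.filter (fun p : Fin N × Fin N => ¬ p.1 < p.2), f p.1 p.2
      = ∑ p ∈ Finset.univ.filter (fun p : Fin N × Fin N => p.2 < p.1), f p.1 p.2 := by
    symm
    apply Finset.sum_subset
    · intro p hp; simp only [Finset.mem_filter, Finset.mem_univ, true_and] at hp ⊢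
      exact not_lt_of_gt hp
    · intro p hp hp2
      simp only [Finset.mem_filter, Finset.mem_univ, true_and] at hp hp2
      have : p.1 = p.2 := le_antisymm (not_lt.mp hp2) (not_lt.mp hp)
      rw [this]; exact hdiag p.2
  rw [← h0, ← Finset.sum_filter_add_sum_filter_not Finset.univ
      (fun p : Fin N × Fin N => p.1 < p.2) (fun p => f p.1 p.2), hsub, ← hswap]
  ring

lemma trace_psd_mul {n : ℕ} {A B : Matrix (Fin n) (Fin n) ℝ}
    (hA : A.PosSemidef) (hB : B.PosSemidef) :
    0 ≤ (A * B).trace ∧ ((A * B).trace = 0 → A * B = 0) := by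
  obtain ⟨a, haH, haa⟩ : ∃ a : Matrix (Fin n) (Fin n) ℝ, aᵀ = a ∧ a * a = A := by
    open scoped MatrixOrder in
    (obtain ⟨X, hX, -, hXA⟩ := CFC.exists_sqrt_of_isSelfAdjoint_of_quasispectrumRestricts
      hA.isHermitian (QuasispectrumRestricts.nnreal_of_nonneg hA.nonneg)
     exact ⟨X, by simpa [Matrix.star_eq_conjTranspose] using hX.star_eq, hXA⟩)
  obtain ⟨b, hbH, hbb⟩ : ∃ b : Matrix (Fin n) (Fin n) ℝ, bᵀ = b ∧ b * b = B := by
    open scoped MatrixOrder in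
    (obtain ⟨X, hX, -, hXA⟩ := CFC.exists_sqrt_of_isSelfAdjoint_of_quasispectrumRestricts
      hB.isHermitian (QuasispectrumRestricts.nnreal_of_nonneg hB.nonneg)
     exact ⟨X, by simpa [Matrix.star_eq_conjTranspose] using hX.star_eq, hXA⟩)
  have hMT : (a * b)ᵀ = b * a := by rw [Matrix.transpose_mul, haH, hbH]
  have hAB : A * B = a * ((a * b) * b) := by
    rw [← haa, ← hbb]; simp [Matrix.mul_assoc]
  have htr : (A * B).trace = ((a * b)ᵀ * (a * b)).trace := by
    rw [hAB, hMT]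
    rw [show a * ((a * b) * b) = (a * (a * b)) * b by simp [Matrix.mul_assoc],
      Matrix.trace_mul_comm]
    congr 1
    simp [Matrix.mul_assoc]
  have htr2 : ((a * b)ᵀ * (a * b)).trace = ∑ j, ∑ i, ((a * b) i j)^2 := by
    simp [Matrix.trace, Matrix.mul_apply, Matrix.diag, sq, mul_comm]
  have hnn : 0 ≤ (A * B).trace := by
    rw [htr, htr2]
    exact Finset.sum_nonneg fun j _ => Finset.sum_nonneg fun i _ => sq_nonneg _
  refine ⟨hnn, fun h0 => ?_⟩
  have hM0 : a * b = 0 := by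
    ext i j
    have hz : ∑ j, ∑ i, ((a * b) i j)^2 = 0 := by rw [← htr2, ← htr, h0]
    have h1 := (Finset.sum_eq_zero_iff_of_nonneg
      (fun j _ => Finset.sum_nonneg fun i _ => sq_nonneg ((a*b) i j))).mp hz j (Finset.mem_univ j)
    have h2 := (Finset.sum_eq_zero_iff_of_nonneg
      (fun i _ => sq_nonneg ((a*b) i j))).mp h1 i (Finset.mem_univ i)
    simpa using pow_eq_zero_iff (n := 2) (by norm_num) |>.mp h2
  rw [hAB, hM0, Matrix.zero_mul, Matrix.mul_zero]

/-- If there exist a diagonal matrix `D` and `ν ∈ ℝ` such that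
`S = D + ν·11ᵀ − s·W` is positive semidefinite with `Sσ = 0` and strictly positive
second smallest eigenvalue (equivalently, given PSD and `Sσ = 0`: the quadratic form
is strictly positive on nonzero vectors orthogonal to `σ`), then `σσᵀ` is the unique
optimal solution of the SDP. -/
theorem sdp_dual_certificate
    (N : ℕ) (hN : Even N)
    (σ : Fin N → ℝ) (hσ : ∀ i, σ i = 1 ∨ σ i = -1) (hbal : ∑ i, σ i = 0)
    (W : Matrix (Fin N) (Fin N) ℝ) (hWsymm : W.IsSymm) (hWdiag : ∀ i, W i i = 0)
    (s : ℝ) (hs : s = 1 ∨ s = -1)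
    (D : Matrix (Fin N) (Fin N) ℝ) (hDdiag : ∀ i j, i ≠ j → D i j = 0)
    (ν : ℝ)
    (S : Matrix (Fin N) (Fin N) ℝ)
    (hSdef : S = D + ν • (Matrix.of fun _ _ => (1 : ℝ)) - s • W)
    (hSpsd : S.PosSemidef)
    (hSpos : ∀ x : Fin N → ℝ, x ⬝ᵥ σ = 0 → x ≠ 0 → 0 < x ⬝ᵥ S.mulVec x)
    (hSσ : S.mulVec σ = 0) :
    ∀ X : Matrix (Fin N) (Fin N) ℝ, X.PosSemidef → (∀ i, X i i = 1) →
      (∑ i, ∑ j, X i j = 0) →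
      ((∑ p ∈ Finset.univ.filter (fun p : Fin N × Fin N => p.1 < p.2),
          s * W p.1 p.2 * X p.1 p.2)
        ≤ ∑ p ∈ Finset.univ.filter (fun p : Fin N × Fin N => p.1 < p.2),
            s * W p.1 p.2 * (σ p.1 * σ p.2))
      ∧ ((∑ p ∈ Finset.univ.filter (fun p : Fin N × Fin N => p.1 < p.2),
            s * W p.1 p.2 * X p.1 p.2)
          = (∑ p ∈ Finset.univ.filter (fun p : Fin N × Fin N => p.1 < p.2),
              s * W p.1 p.2 * (σ p.1 * σ p.2))
        ↔ X = vecMulVec σ σ) := by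
  intro X hXpsd hXdiag hXsum
  classical
  by_cases hN0 : N = 0
  · subst hN0
    have hX : X = vecMulVec σ σ := by ext i j; exact i.elim0
    have hsum : (∑ p ∈ Finset.univ.filter (fun p : Fin 0 × Fin 0 => p.1 < p.2),
        s * W p.1 p.2 * X p.1 p.2)
        = ∑ p ∈ Finset.univ.filter (fun p : Fin 0 × Fin 0 => p.1 < p.2),
            s * W p.1 p.2 * (σ p.1 * σ p.2) := by
      apply Finset.sum_congr rfl
      intro p _
      exact p.1.elim0
    exact ⟨le_of_eq hsum, ⟨fun _ => hX, fun _ => hsum⟩⟩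
  -- basic facts
  have hNne : (N : ℝ) ≠ 0 := Nat.cast_ne_zero.mpr hN0
  have hsig2 : ∀ i, σ i * σ i = 1 := by
    intro i; rcases hσ i with h | h <;> rw [h] <;> norm_num
  have hXsym : ∀ i j, X i j = X j i := by
    intro i j
    have h := congrFun (congrFun hXpsd.1 i) j
    simpa [Matrix.conjTranspose_apply] using h.symm
  have hWs : ∀ i j, W i j = W j i := fun i j => congrFun (congrFun hWsymm j) i
  have hW : ∀ i j, s * W i j = D i j + ν - S i j := by
    intro i j
    have h := congrFun (congrFun hSdef i) j
    simp only [Matrix.sub_apply, Matrix.add_apply, Matrix.smul_apply, Matrix.of_apply,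
      smul_eq_mul, mul_one] at h
    linarith
  -- the key identity for any feasible symmetric matrix
  have key : ∀ Y : Matrix (Fin N) (Fin N) ℝ, (∀ i, Y i i = 1) → (∑ i, ∑ j, Y i j = 0) →
      (∑ i, ∑ j, s * W i j * Y i j)
        = (∑ i, D i i) - ∑ i, ∑ j, S i j * Y i j := by
    intro Y hYd hYs
    have split : ∑ i, ∑ j, s * W i j * Y i j
        = (∑ i, ∑ j, D i j * Y i j) + ν * (∑ i, ∑ j, Y i j)
          - ∑ i, ∑ j, S i j * Y i j := by
      rw [Finset.mul_sum]
      simp_rw [Finset.mul_sum]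
      rw [← Finset.sum_add_distrib, ← Finset.sum_sub_distrib]
      apply Finset.sum_congr rfl
      intro i _
      rw [← Finset.sum_add_distrib, ← Finset.sum_sub_distrib]
      apply Finset.sum_congr rfl
      intro j _
      rw [hW i j]; ring
    have hD : ∀ i, ∑ j, D i j * Y i j = D i i := by
      intro i
      rw [Finset.sum_eq_single i]
      · rw [hYd]; ring
      · intro j _ hji; rw [hDdiag i j (Ne.symm hji)]; ring
      · intro h; exact absurd (Finset.mem_univ i) h
    rw [split, hYs, mul_zero, add_zero]
    congr 1
    exact Finset.sum_congr rfl fun i _ => hD i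
  -- the S-part is a trace
  have htrace : ∑ i, ∑ j, S i j * X i j = (S * X).trace := by
    simp only [Matrix.trace, Matrix.diag_apply, Matrix.mul_apply]
    exact Finset.sum_congr rfl fun i _ => Finset.sum_congr rfl fun j _ => by rw [hXsym i j]
  -- facts for σσᵀ
  have hsigsum : ∑ i, ∑ j, σ i * σ j = 0 := by
    rw [← Finset.sum_mul_sum]
    rw [hbal, zero_mul]
  have hSsig : ∑ i, ∑ j, S i j * (σ i * σ j) = 0 := by
    have h1 : ∀ i, ∑ j, S i j * (σ i * σ j) = σ i * (S.mulVec σ i) := by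
      intro i
      rw [Matrix.mulVec, dotProduct, Finset.mul_sum]
      exact Finset.sum_congr rfl fun j _ => by ring
    simp only [h1, hSσ, Pi.zero_apply, mul_zero, Finset.sum_const_zero]
  -- trace nonnegativity
  obtain ⟨htr_nn, htr_zero⟩ := trace_psd_mul hSpsd hXpsd
  -- doubling identities
  have e1 : 2 * ∑ p ∈ Finset.univ.filter (fun p : Fin N × Fin N => p.1 < p.2),
        s * W p.1 p.2 * X p.1 p.2 = ∑ i, ∑ j, s * W i j * X i j := by
    exact double_pair (fun i j => s * W i j * X i j)
      (fun i j => show s * W i j * X i j = s * W j i * X j i by rw [hWs i j, hXsym i j])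
      (fun i => show s * W i i * X i i = 0 by rw [hWdiag]; ring)
  have e2 : 2 * ∑ p ∈ Finset.univ.filter (fun p : Fin N × Fin N => p.1 < p.2),
        s * W p.1 p.2 * (σ p.1 * σ p.2) = ∑ i, ∑ j, s * W i j * (σ i * σ j) := by
    exact double_pair (fun i j => s * W i j * (σ i * σ j))
      (fun i j => show s * W i j * (σ i * σ j) = s * W j i * (σ j * σ i) by rw [hWs i j]; ring)
      (fun i => show s * W i i * (σ i * σ i) = 0 by rw [hWdiag]; ring)
  have kX : ∑ i, ∑ j, s * W i j * X i j = (∑ i, D i i) - (S * X).trace := by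
    rw [key X hXdiag hXsum, htrace]
  have kσ : ∑ i, ∑ j, s * W i j * (σ i * σ j) = ∑ i, D i i := by
    have hdiag : ∀ i, (Matrix.of fun i j => σ i * σ j : Matrix (Fin N) (Fin N) ℝ) i i = 1 :=
      fun i => hsig2 i
    have := key (Matrix.of fun i j => σ i * σ j) hdiag (by simpa using hsigsum)
    simpa [hSsig] using this
  constructor
  · -- inequality
    have h2 : 2 * (∑ p ∈ Finset.univ.filter (fun p : Fin N × Fin N => p.1 < p.2),
        s * W p.1 p.2 * X p.1 p.2) ≤ 2 * ∑ p ∈ Finset.univ.filter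
          (fun p : Fin N × Fin N => p.1 < p.2), s * W p.1 p.2 * (σ p.1 * σ p.2) := by
      rw [e1, e2, kX, kσ]; linarith
    linarith
  · constructor
    · -- equality implies X = σσᵀ
      intro heq
      have htr0 : (S * X).trace = 0 := by
        have h2 : ∑ i, ∑ j, s * W i j * X i j = ∑ i, ∑ j, s * W i j * (σ i * σ j) := by
          rw [← e1, ← e2, heq]
        rw [kX, kσ] at h2
        linarith
      have hSX : S * X = 0 := htr_zero htr0
      -- every column of X is in the kernel of S
      have hcol : ∀ j, S.mulVec (fun k => X k j) = 0 := by
        intro j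
        funext i
        have h := congrFun (congrFun hSX i) j
        simpa [Matrix.mulVec, dotProduct, Matrix.mul_apply] using h
      have hσσ : σ ⬝ᵥ σ = (N : ℝ) := by
        simp only [dotProduct]
        rw [Finset.sum_congr rfl fun i _ => hsig2 i]
        simp
      -- kernel of S is spanned by σ
      have hker : ∀ x : Fin N → ℝ, S.mulVec x = 0 → x = ((x ⬝ᵥ σ) / N) • σ := by
        intro x hx
        set c : ℝ := (x ⬝ᵥ σ) / N with hc
        have hyσ : (x - c • σ) ⬝ᵥ σ = 0 := by
          rw [sub_dotProduct, smul_dotProduct, hσσ, smul_eq_mul, hc]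
          field_simp
          ring
        have hSy : S.mulVec (x - c • σ) = 0 := by
          rw [Matrix.mulVec_sub, Matrix.mulVec_smul, hx, hSσ]
          simp
        have hy0 : x - c • σ = 0 := by
          by_contra hy
          have hpos := hSpos _ hyσ hy
          rw [hSy] at hpos
          simp [dotProduct] at hpos
        rw [sub_eq_zero] at hy0
        exact hy0
      ext i j
      have h1 := hker _ (hcol j)
      have hXij : X i j = (((fun k => X k j) ⬝ᵥ σ) / N) * σ i := congrFun h1 i
      have hXjj : X j j = (((fun k => X k j) ⬝ᵥ σ) / N) * σ j := congrFun h1 j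
      rw [hXdiag j] at hXjj
      set c : ℝ := ((fun k => X k j) ⬝ᵥ σ) / N
      have hcj : c = σ j := by
        calc c = c * (σ j * σ j) := by rw [hsig2]; ring
          _ = (c * σ j) * σ j := by ring
          _ = 1 * σ j := by rw [← hXjj]
          _ = σ j := one_mul _
      rw [Matrix.vecMulVec_apply, hXij, hcj]
      ring
    · -- X = σσᵀ implies equality
      intro h
      rw [h]
      exact Finset.sum_congr rfl fun p _ => by rw [Matrix.vecMulVec_apply]
end

section
/- Let N be even, let σ ∈ {−1,+1}^N satisfy Σ_i σ_i = 0, let W be a symmetric real N×N matrix with zero diagonal, and let w_in, w_out ≥ 0 satisfy w_in + w_out ≤ 2. Let EW := ((w_in + w_out)/2)·11ᵀ + ((w_in − w_out)/2)·σσᵀ − w_in·I. Define the diagonal matrix D by D_{ii} = Σ_j W_{ij} σ_i σ_j, and set S := D + 11ᵀ − W. Then for every x ∈ ℝ^N with xᵀσ = 0 and ‖x‖₂ = 1, one has xᵀ S x ≥ min_i D_{ii} − ‖W − EW‖₂, where ‖·‖₂ denotes the spectral (operator) norm. -/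
open Matrix Finset RealInnerProductSpace


lemma quad_abs_le (N : ℕ) (M : Matrix (Fin N) (Fin N) ℝ) (x : Fin N → ℝ)
    (hx : ∑ i, x i ^ 2 = 1) :
    |x ⬝ᵥ M.mulVec x| ≤ ‖Matrix.toEuclideanCLM (𝕜 := ℝ) M‖ := by
  set v : EuclideanSpace ℝ (Fin N) := (WithLp.equiv 2 (Fin N → ℝ)).symm x with hv
  have hnv : ‖v‖ = 1 := by
    rw [EuclideanSpace.norm_eq]
    have h : ∑ i, ‖v i‖ ^ 2 = 1 := by
      simpa [hv, Real.norm_eq_abs, sq_abs] using hx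
    rw [h, Real.sqrt_one]
  have hinner : x ⬝ᵥ M.mulVec x = ⟪v, (Matrix.toEuclideanCLM (𝕜 := ℝ) M) v⟫ := by
    rw [Matrix.inner_toEuclideanCLM, hv]
    simp [Matrix.toLin'_apply]
  rw [hinner]
  calc |⟪v, (Matrix.toEuclideanCLM (𝕜 := ℝ) M) v⟫|
      ≤ ‖v‖ * ‖(Matrix.toEuclideanCLM (𝕜 := ℝ) M) v‖ := abs_real_inner_le_norm _ _
    _ ≤ ‖v‖ * (‖Matrix.toEuclideanCLM (𝕜 := ℝ) M‖ * ‖v‖) := by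
        gcongr
        exact ContinuousLinearMap.le_opNorm _ _
    _ = ‖Matrix.toEuclideanCLM (𝕜 := ℝ) M‖ := by rw [hnv]; ring


/-- assortative case: for the dual certificate matrix
`S = D + 11ᵀ − W` with `D_ii = Σ_j W_ij σ_i σ_j`, every unit vector `x ⊥ σ`
satisfies `xᵀSx ≥ min_i D_ii − ‖W − EW‖₂` (spectral norm). -/
theorem quadratic_form_lower_bound_assortative
    (N : ℕ) (hN : Even N)
    (σ : Fin N → ℝ) (hσ : ∀ i, σ i = 1 ∨ σ i = -1) (hbal : ∑ i, σ i = 0)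
    (W : Matrix (Fin N) (Fin N) ℝ) (hWsymm : W.IsSymm) (hWdiag : ∀ i, W i i = 0)
    (win wout : ℝ) (hwin : 0 ≤ win) (hwout : 0 ≤ wout) (hw2 : win + wout ≤ 2)
    (EW : Matrix (Fin N) (Fin N) ℝ)
    (hEW : EW = ((win + wout) / 2) • (Matrix.of fun _ _ => (1 : ℝ))
      + ((win - wout) / 2) • vecMulVec σ σ - win • (1 : Matrix (Fin N) (Fin N) ℝ))
    (D : Matrix (Fin N) (Fin N) ℝ)
    (hD : D = Matrix.diagonal (fun i => ∑ j, W i j * σ i * σ j))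
    (S : Matrix (Fin N) (Fin N) ℝ)
    (hS : S = D + (Matrix.of fun _ _ => (1 : ℝ)) - W)
    (x : Fin N → ℝ) (hxσ : x ⬝ᵥ σ = 0) (hx : ∑ i, x i ^ 2 = 1) :
    (⨅ i, D i i) - ‖Matrix.toEuclideanCLM (𝕜 := ℝ) (W - EW)‖ ≤ x ⬝ᵥ S.mulVec x := by
  have hNpos : 0 < N := by
    by_contra h
    push_neg at h
    interval_cases N
    simp at hx
  haveI : Nonempty (Fin N) := Fin.pos_iff_nonempty.mp hNpos
  -- pieces
  have hones : x ⬝ᵥ (Matrix.of fun _ _ => (1 : ℝ)).mulVec x = (∑ i, x i) ^ 2 := by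
    simp only [dotProduct, Matrix.mulVec, Matrix.of_apply, one_mul, sq,
      Finset.mul_sum, Finset.sum_mul]
    exact Finset.sum_congr rfl fun i _ => Finset.sum_congr rfl fun j _ => mul_comm _ _
  have hvv : x ⬝ᵥ (vecMulVec σ σ).mulVec x = 0 := by
    have : x ⬝ᵥ (vecMulVec σ σ).mulVec x = (x ⬝ᵥ σ) * (σ ⬝ᵥ x) := by
      simp only [dotProduct, Matrix.mulVec, Matrix.vecMulVec_apply,
        Finset.mul_sum, Finset.sum_mul]
      congr 1; ext i; congr 1; ext j; ring
    rw [this, hxσ, zero_mul]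
  have hid : x ⬝ᵥ ((1 : Matrix (Fin N) (Fin N) ℝ)).mulVec x = 1 := by
    simp only [Matrix.one_mulVec]
    simpa [dotProduct, sq] using hx
  have hDq : x ⬝ᵥ D.mulVec x = ∑ i, D i i * x i ^ 2 := by
    subst hD
    simp [dotProduct, Matrix.mulVec_diagonal, Matrix.diagonal_apply_eq, sq]
    congr 1; ext i; ring
  -- EW quadratic form
  have hEWq : x ⬝ᵥ EW.mulVec x = ((win + wout) / 2) * (∑ i, x i) ^ 2 - win := by
    subst hEW
    simp only [Matrix.sub_mulVec, Matrix.add_mulVec, Matrix.smul_mulVec,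
      dotProduct_sub, dotProduct_add, dotProduct_smul, smul_eq_mul]
    rw [hones, hvv, hid]
    ring
  -- decomposition
  have hdecomp : x ⬝ᵥ S.mulVec x
      = (∑ i, D i i * x i ^ 2) + (1 - (win + wout) / 2) * (∑ i, x i) ^ 2 + win
        - x ⬝ᵥ (W - EW).mulVec x := by
    have hW : x ⬝ᵥ W.mulVec x = x ⬝ᵥ (W - EW).mulVec x + ((win + wout) / 2) * (∑ i, x i) ^ 2 - win := by
      rw [Matrix.sub_mulVec, dotProduct_sub, hEWq]; ring
    subst hS
    rw [Matrix.sub_mulVec, Matrix.add_mulVec, dotProduct_sub, dotProduct_add,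
      hones, hDq, hW]
    ring
  -- bounds
  have hinf_le : (⨅ i, D i i) ≤ ∑ i, D i i * x i ^ 2 := by
    have hbdd : BddBelow (Set.range fun i => D i i) := (Set.finite_range _).bddBelow
    calc (⨅ i, D i i) = (⨅ i, D i i) * ∑ i, x i ^ 2 := by rw [hx, mul_one]
      _ = ∑ i, (⨅ i, D i i) * x i ^ 2 := by rw [Finset.mul_sum]
      _ ≤ ∑ i, D i i * x i ^ 2 := by
          apply Finset.sum_le_sum
          intro i _
          exact mul_le_mul_of_nonneg_right (ciInf_le hbdd i) (sq_nonneg _)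
  have habs := quad_abs_le N (W - EW) x hx
  have h1 : x ⬝ᵥ (W - EW).mulVec x ≤ ‖Matrix.toEuclideanCLM (𝕜 := ℝ) (W - EW)‖ :=
    (le_abs_self _).trans habs
  have h2 : 0 ≤ (1 - (win + wout) / 2) * (∑ i, x i) ^ 2 :=
    mul_nonneg (by linarith) (sq_nonneg _)
  rw [hdecomp]
  linarith
end

section
/- Let N be even, let σ ∈ {−1,+1}^N satisfy Σ_i σ_i = 0, let W be a symmetric real N×N matrix with zero diagonal, and let w_in, w_out ≥ 0 satisfy w_in + w_out ≤ 2. Let EW := ((w_in + w_out)/2)·11ᵀ + ((w_in − w_out)/2)·σσᵀ − w_in·I. Define the diagonal matrix D by D_{ii} = −Σ_j W_{ij} σ_i σ_j, and set S := D + W. Then for every x ∈ ℝ^N with xᵀσ = 0 and ‖x‖₂ = 1, one has xᵀ S x ≥ min_i D_{ii} − ‖W − EW‖₂ − w_in, where ‖·‖₂ denotes the spectral (operator) norm. -/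
open Matrix Finset

/-- disassortative case: for the dual certificate matrix
`S = D + W` with `D_ii = −Σ_j W_ij σ_i σ_j`, every unit vector `x ⊥ σ`
satisfies `xᵀSx ≥ min_i D_ii − ‖W − EW‖₂ − w_in` (spectral norm). -/
theorem quadratic_form_lower_bound_disassortative
    (N : ℕ) (hN : Even N)
    (σ : Fin N → ℝ) (hσ : ∀ i, σ i = 1 ∨ σ i = -1) (hbal : ∑ i, σ i = 0)
    (W : Matrix (Fin N) (Fin N) ℝ) (hWsymm : W.IsSymm) (hWdiag : ∀ i, W i i = 0)
    (win wout : ℝ) (hwin : 0 ≤ win) (hwout : 0 ≤ wout) (hw2 : win + wout ≤ 2)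
    (EW : Matrix (Fin N) (Fin N) ℝ)
    (hEW : EW = ((win + wout) / 2) • (Matrix.of fun _ _ => (1 : ℝ))
      + ((win - wout) / 2) • vecMulVec σ σ - win • (1 : Matrix (Fin N) (Fin N) ℝ))
    (D : Matrix (Fin N) (Fin N) ℝ)
    (hD : D = Matrix.diagonal (fun i => -∑ j, W i j * σ i * σ j))
    (S : Matrix (Fin N) (Fin N) ℝ)
    (hS : S = D + W)
    (x : Fin N → ℝ) (hxσ : x ⬝ᵥ σ = 0) (hx : ∑ i, x i ^ 2 = 1) :
    (⨅ i, D i i) - ‖Matrix.toEuclideanCLM (𝕜 := ℝ) (W - EW)‖ - win ≤ x ⬝ᵥ S.mulVec x := by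
  have hNpos : 0 < N := by
    rcases Nat.eq_zero_or_pos N with h | h
    · subst h; simp at hx
    · exact h
  haveI : Nonempty (Fin N) := Fin.pos_iff_nonempty.mp hNpos
  -- decomposition
  have hdecomp : x ⬝ᵥ S.mulVec x
      = x ⬝ᵥ D.mulVec x + x ⬝ᵥ (W - EW).mulVec x + x ⬝ᵥ EW.mulVec x := by
    rw [hS, add_mulVec, dotProduct_add, sub_mulVec, dotProduct_sub]
    ring
  -- bound D part
  have hB : (⨅ i, D i i) ≤ x ⬝ᵥ D.mulVec x := by
    have h1 : x ⬝ᵥ D.mulVec x = ∑ i, D i i * x i ^ 2 := by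
      subst hD
      simp [dotProduct, mulVec_diagonal, diagonal_apply_eq]
      congr 1; ext i; ring
    rw [h1]
    have h2 : (⨅ i, D i i) = ∑ i, (⨅ j, D j j) * x i ^ 2 := by
      rw [← Finset.mul_sum, hx, mul_one]
    rw [h2]
    refine Finset.sum_le_sum fun i _ => ?_
    exact mul_le_mul_of_nonneg_right
      (ciInf_le (Finite.bddBelow_range _) i) (sq_nonneg _)
  -- bound (W - EW) part via operator norm
  have hC : -‖Matrix.toEuclideanCLM (𝕜 := ℝ) (W - EW)‖ ≤ x ⬝ᵥ (W - EW).mulVec x := by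
    set M := W - EW
    set f := Matrix.toEuclideanCLM (𝕜 := ℝ) M with hf
    set y : EuclideanSpace ℝ (Fin N) := (WithLp.equiv 2 _).symm x with hy
    have hyn : ‖y‖ = 1 := by
      have : ‖y‖ ^ 2 = 1 := by
        rw [EuclideanSpace.norm_eq]
        rw [Real.sq_sqrt (by positivity)]
        simpa [hy, Real.norm_eq_abs, sq_abs] using hx
      nlinarith [norm_nonneg y]
    have hinner : x ⬝ᵥ M.mulVec x = inner ℝ y (f y) := by
      rw [hf, hy, WithLp.equiv_symm_apply, Matrix.toEuclideanCLM_toLp]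
      simp [EuclideanSpace.inner_eq_star_dotProduct, dotProduct, Matrix.mulVec, mul_comm]
    rw [hinner]
    have h1 : |(inner ℝ y (f y) : ℝ)| ≤ ‖f‖ := by
      calc |(inner ℝ y (f y) : ℝ)| ≤ ‖y‖ * ‖f y‖ := abs_real_inner_le_norm y (f y)
        _ ≤ ‖y‖ * (‖f‖ * ‖y‖) := by
            exact mul_le_mul_of_nonneg_left (f.le_opNorm y) (norm_nonneg y)
        _ = ‖f‖ := by rw [hyn]; ring
    linarith [abs_le.mp h1]
  -- bound EW part
  have hD2 : -win ≤ x ⬝ᵥ EW.mulVec x := by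
    have hσx : σ ⬝ᵥ x = 0 := by rwa [dotProduct_comm]
    have h1 : x ⬝ᵥ EW.mulVec x
        = ((win + wout) / 2) * (∑ i, x i) ^ 2 - win := by
      rw [hEW, sub_mulVec, add_mulVec, dotProduct_sub, dotProduct_add,
        smul_mulVec, smul_mulVec, smul_mulVec,
        dotProduct_smul, dotProduct_smul, dotProduct_smul, one_mulVec]
      have h2 : x ⬝ᵥ (Matrix.of fun _ _ => (1 : ℝ)).mulVec x = (∑ i, x i) ^ 2 := by
        simp [dotProduct, Matrix.mulVec, Finset.mul_sum, sq, Finset.sum_mul]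
        exact Finset.sum_congr rfl fun i _ => Finset.sum_congr rfl fun j _ => mul_comm _ _
      have h3 : x ⬝ᵥ (vecMulVec σ σ).mulVec x = 0 := by
        have hmv : (vecMulVec σ σ).mulVec x = fun i => σ i * (σ ⬝ᵥ x) := by
          ext i
          simp [Matrix.mulVec, vecMulVec_apply, dotProduct, Finset.mul_sum, mul_assoc]
        rw [hmv, hσx]
        simp [dotProduct]
      have h4 : x ⬝ᵥ x = 1 := by
        rw [dotProduct]; rw [← hx]; congr 1; ext i; ring
      rw [h2, h3, h4]
      simp [smul_eq_mul]
    rw [h1]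
    have : 0 ≤ ((win + wout) / 2) * (∑ i, x i) ^ 2 := by positivity
    linarith
  rw [hdecomp]
  linarith
end

section
/- The function ψ attains its supremum on ℝ: sup_{x∈ℝ} ψ(x) is finite and there exists x* ∈ ℝ with ψ(x*) = sup_{x∈ℝ} ψ(x). In particular, ψ(x) → −∞ as x → +∞ and as x → −∞. -/
open Finset Filter

/-- ψ attains its (finite) supremum on ℝ; in particular
ψ(x) → −∞ as x → +∞ and as x → −∞. -/
theorem psi_attains_sup
    (M : ℕ) (hM : 1 ≤ M) (d : Fin M → ℕ) (hd : ∀ m, 2 ≤ d m)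
    (α : Fin M → ℕ → ℝ) (hα : ∀ m r, r ≤ d m → 0 < α m r)
    (ψ : ℝ → ℝ)
    (hψ : ∀ x, ψ x = ∑ m, ((2 : ℝ) ^ (d m - 1))⁻¹ * ∑ r ∈ Finset.range (d m),
      ((d m - 1).choose r : ℝ) * α m r
        * (1 - Real.exp (-(x * ((d m : ℝ) - 1 - 2 * r))))) :
    BddAbove (Set.range ψ)
    ∧ (∃ xstar : ℝ, ψ xstar = ⨆ x : ℝ, ψ x)
    ∧ Tendsto ψ atTop atBot
    ∧ Tendsto ψ atBot atBot := by
  have hψfun : ψ = fun x => ∑ m, ((2 : ℝ) ^ (d m - 1))⁻¹ * ∑ r ∈ Finset.range (d m),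
      ((d m - 1).choose r : ℝ) * α m r
        * (1 - Real.exp (-(x * ((d m : ℝ) - 1 - 2 * r)))) := funext hψ
  have hcont : Continuous ψ := by
    rw [hψfun]; fun_prop
  set C : ℝ := ∑ m, ((2 : ℝ) ^ (d m - 1))⁻¹ * ∑ r ∈ Finset.range (d m),
      ((d m - 1).choose r : ℝ) * α m r with hC
  -- key bound
  have key : ∀ (m₀ : Fin M) (r₀ : ℕ), r₀ ∈ Finset.range (d m₀) → ∀ x : ℝ,
      ψ x ≤ C - ((2 : ℝ) ^ (d m₀ - 1))⁻¹ *
        (((d m₀ - 1).choose r₀ : ℝ) * α m₀ r₀ *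
          Real.exp (-(x * ((d m₀ : ℝ) - 1 - 2 * r₀)))) := by
    intro m₀ r₀ hr₀ x
    rw [hψ x]
    have hrw : ∀ m : Fin M, ((2 : ℝ) ^ (d m - 1))⁻¹ * ∑ r ∈ Finset.range (d m),
        ((d m - 1).choose r : ℝ) * α m r * (1 - Real.exp (-(x * ((d m : ℝ) - 1 - 2 * r))))
      = (((2 : ℝ) ^ (d m - 1))⁻¹ * ∑ r ∈ Finset.range (d m), ((d m - 1).choose r : ℝ) * α m r)
        - ((2 : ℝ) ^ (d m - 1))⁻¹ * ∑ r ∈ Finset.range (d m),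
            ((d m - 1).choose r : ℝ) * α m r * Real.exp (-(x * ((d m : ℝ) - 1 - 2 * r))) := by
      intro m
      rw [← mul_sub, ← Finset.sum_sub_distrib]
      congr 1
      refine Finset.sum_congr rfl fun r _ => by ring
    simp only [hrw, Finset.sum_sub_distrib]
    have hterm : ∀ m : Fin M, ∀ r ∈ Finset.range (d m),
        0 ≤ ((d m - 1).choose r : ℝ) * α m r * Real.exp (-(x * ((d m : ℝ) - 1 - 2 * r))) := by
      intro m r hr
      have : 0 < α m r := hα m r (le_of_lt (Finset.mem_range.mp hr))
      positivity
    have hinner : ((d m₀ - 1).choose r₀ : ℝ) * α m₀ r₀ * Real.exp (-(x * ((d m₀ : ℝ) - 1 - 2 * r₀)))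
        ≤ ∑ r ∈ Finset.range (d m₀),
            ((d m₀ - 1).choose r : ℝ) * α m₀ r * Real.exp (-(x * ((d m₀ : ℝ) - 1 - 2 * r))) :=
      Finset.single_le_sum (hterm m₀) hr₀
    have houter : ((2 : ℝ) ^ (d m₀ - 1))⁻¹ *
        (((d m₀ - 1).choose r₀ : ℝ) * α m₀ r₀ * Real.exp (-(x * ((d m₀ : ℝ) - 1 - 2 * r₀))))
        ≤ ∑ m, ((2 : ℝ) ^ (d m - 1))⁻¹ * ∑ r ∈ Finset.range (d m),
            ((d m - 1).choose r : ℝ) * α m r * Real.exp (-(x * ((d m : ℝ) - 1 - 2 * r))) := by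
      have hstep := Finset.single_le_sum
          (f := fun m : Fin M => ((2 : ℝ) ^ (d m - 1))⁻¹ * ∑ r ∈ Finset.range (d m),
            ((d m - 1).choose r : ℝ) * α m r * Real.exp (-(x * ((d m : ℝ) - 1 - 2 * r))))
          (fun m _ => mul_nonneg (by positivity) (Finset.sum_nonneg (hterm m)))
          (Finset.mem_univ m₀)
      exact le_trans (mul_le_mul_of_nonneg_left hinner (by positivity)) hstep
    linarith
  have m₀ : Fin M := ⟨0, hM⟩
  have hD : 2 ≤ d m₀ := hd m₀
  have hDpos : (0:ℝ) < (d m₀ : ℝ) - 1 := by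
    have : (2:ℝ) ≤ (d m₀ : ℝ) := by exact_mod_cast hD
    linarith
  -- tendsto atTop
  have hTop : Tendsto ψ atTop atBot := by
    have hr₀ : d m₀ - 1 ∈ Finset.range (d m₀) :=
      Finset.mem_range.mpr (Nat.sub_lt (by omega) one_pos)
    set w : ℝ := ((2 : ℝ) ^ (d m₀ - 1))⁻¹ * (((d m₀ - 1).choose (d m₀ - 1) : ℝ) * α m₀ (d m₀ - 1))
      with hw
    have hwpos : 0 < w := by
      have h1 : 0 < α m₀ (d m₀ - 1) := hα m₀ _ (Nat.sub_le _ _)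
      have h2 : 0 < (d m₀ - 1).choose (d m₀ - 1) := Nat.choose_pos le_rfl
      have h2' : (0:ℝ) < ((d m₀ - 1).choose (d m₀ - 1) : ℝ) := by exact_mod_cast h2
      positivity
    have hcast : ((d m₀ - 1 : ℕ) : ℝ) = (d m₀ : ℝ) - 1 := by
      have : 1 ≤ d m₀ := by omega
      push_cast [Nat.cast_sub this]
      ring
    have hb : ∀ x : ℝ, ψ x ≤ C - w * Real.exp (x * ((d m₀ : ℝ) - 1)) := by
      intro x
      have := key m₀ (d m₀ - 1) hr₀ x
      rw [hcast] at this
      calc ψ x ≤ _ := this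
        _ = C - w * Real.exp (x * ((d m₀ : ℝ) - 1)) := by
          rw [hw]; ring_nf
    have h1 : Tendsto (fun x : ℝ => x * ((d m₀ : ℝ) - 1)) atTop atTop :=
      Tendsto.atTop_mul_const hDpos tendsto_id
    have h2 : Tendsto (fun x : ℝ => w * Real.exp (x * ((d m₀ : ℝ) - 1))) atTop atTop :=
      (Real.tendsto_exp_atTop.comp h1).const_mul_atTop hwpos
    have h3 : Tendsto (fun x : ℝ => C - w * Real.exp (x * ((d m₀ : ℝ) - 1))) atTop atBot := by
      simp only [sub_eq_add_neg]
      exact tendsto_atBot_add_const_left _ C (tendsto_neg_atTop_atBot.comp h2)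
    exact tendsto_atBot_mono hb h3
  -- tendsto atBot
  have hBot : Tendsto ψ atBot atBot := by
    have hr₀ : 0 ∈ Finset.range (d m₀) := Finset.mem_range.mpr (by omega)
    set w : ℝ := ((2 : ℝ) ^ (d m₀ - 1))⁻¹ * (((d m₀ - 1).choose 0 : ℝ) * α m₀ 0) with hw
    have hwpos : 0 < w := by
      have h1 : 0 < α m₀ 0 := hα m₀ 0 (by omega)
      have h2' : (0:ℝ) < ((d m₀ - 1).choose 0 : ℝ) := by
        simp
      positivity
    have hb : ∀ x : ℝ, ψ x ≤ C - w * Real.exp (-(x * ((d m₀ : ℝ) - 1))) := by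
      intro x
      have := key m₀ 0 hr₀ x
      calc ψ x ≤ _ := this
        _ = C - w * Real.exp (-(x * ((d m₀ : ℝ) - 1))) := by
          rw [hw]; push_cast; ring_nf
    have h1 : Tendsto (fun x : ℝ => -(x * ((d m₀ : ℝ) - 1))) atBot atTop :=
      tendsto_neg_atBot_atTop.comp (Tendsto.atBot_mul_const hDpos tendsto_id)
    have h2 : Tendsto (fun x : ℝ => w * Real.exp (-(x * ((d m₀ : ℝ) - 1)))) atBot atTop :=
      (Real.tendsto_exp_atTop.comp h1).const_mul_atTop hwpos
    have h3 : Tendsto (fun x : ℝ => C - w * Real.exp (-(x * ((d m₀ : ℝ) - 1)))) atBot atBot := by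
      simp only [sub_eq_add_neg]
      exact tendsto_atBot_add_const_left _ C (tendsto_neg_atTop_atBot.comp h2)
    exact tendsto_atBot_mono hb h3
  have hco : Tendsto ψ (cocompact ℝ) atBot := by
    rw [cocompact_eq_atBot_atTop, tendsto_sup]
    exact ⟨hBot, hTop⟩
  obtain ⟨xstar, hmax⟩ := hcont.exists_forall_ge hco
  have hbdd : BddAbove (Set.range ψ) := by
    refine ⟨ψ xstar, ?_⟩
    rintro _ ⟨y, rfl⟩
    exact hmax y
  refine ⟨hbdd, ⟨xstar, ?_⟩, hTop, hBot⟩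
  exact le_antisymm (le_ciSup hbdd xstar) (ciSup_le hmax)
end

section
/- Let s = sgn(ξ) with ξ ≠ 0. Then the supremum of ψ over all of ℝ is attained on the half-line {s·λ : λ ≥ 0}; that is, sup_{x∈ℝ} ψ(x) = sup_{λ≥0} ψ(s·λ). (Equivalently: if ξ > 0 then sup_{x∈ℝ} ψ(x) = sup_{x≥0} ψ(x), and if ξ < 0 then sup_{x∈ℝ} ψ(x) = sup_{x≤0} ψ(x).) -/
open Finset

/-- with s = sgn(ξ) and ξ ≠ 0, the supremum of ψ over ℝ is
attained on the half-line {s·λ : λ ≥ 0}. -/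
theorem psi_sup_on_halfline
    (M : ℕ) (hM : 1 ≤ M) (d : Fin M → ℕ) (hd : ∀ m, 2 ≤ d m)
    (α : Fin M → ℕ → ℝ) (hα : ∀ m r, r ≤ d m → 0 < α m r)
    (ψ : ℝ → ℝ)
    (hψ : ∀ x, ψ x = ∑ m, ((2 : ℝ) ^ (d m - 1))⁻¹ * ∑ r ∈ Finset.range (d m),
      ((d m - 1).choose r : ℝ) * α m r
        * (1 - Real.exp (-(x * ((d m : ℝ) - 1 - 2 * r)))))
    (ξ : ℝ)
    (hξdef : ξ = ∑ m, ((2 : ℝ) ^ (d m - 1))⁻¹ * ∑ r ∈ Finset.range (d m),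
      ((d m - 1).choose r : ℝ) * ((d m : ℝ) - 1 - 2 * r) * α m r)
    (hξ : ξ ≠ 0)
    (s : ℝ) (hs : s = Real.sign ξ) :
    (⨆ x : ℝ, ψ x) = ⨆ l : {l : ℝ // 0 ≤ l}, ψ (s * l.1) := by
  classical
  set C : ℝ := ∑ m, ((2 : ℝ) ^ (d m - 1))⁻¹ * ∑ r ∈ Finset.range (d m),
      ((d m - 1).choose r : ℝ) * α m r with hC
  have hbd : ∀ x, ψ x ≤ C := by
    intro x
    rw [hψ, hC]
    apply Finset.sum_le_sum
    intro m _
    apply mul_le_mul_of_nonneg_left _ (by positivity)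
    apply Finset.sum_le_sum
    intro r hr
    have hαr := hα m r (le_of_lt (Finset.mem_range.mp hr))
    have hch : (0:ℝ) ≤ ((d m - 1).choose r : ℝ) := Nat.cast_nonneg _
    have hexp := Real.exp_pos (-(x * ((d m : ℝ) - 1 - 2 * r)))
    nlinarith [mul_nonneg (mul_nonneg hch hαr.le) hexp.le]
  have hkey : ∀ x, ψ x ≤ x * ξ := by
    intro x
    rw [hψ, hξdef]
    calc ∑ m, ((2 : ℝ) ^ (d m - 1))⁻¹ * ∑ r ∈ Finset.range (d m),
          ((d m - 1).choose r : ℝ) * α m r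
            * (1 - Real.exp (-(x * ((d m : ℝ) - 1 - 2 * r))))
        ≤ ∑ m, ((2 : ℝ) ^ (d m - 1))⁻¹ * ∑ r ∈ Finset.range (d m),
          x * (((d m - 1).choose r : ℝ) * ((d m : ℝ) - 1 - 2 * r) * α m r) := by
          apply Finset.sum_le_sum
          intro m _
          apply mul_le_mul_of_nonneg_left _ (by positivity)
          apply Finset.sum_le_sum
          intro r hr
          have hαr := hα m r (le_of_lt (Finset.mem_range.mp hr))
          have hch : (0:ℝ) ≤ ((d m - 1).choose r : ℝ) := Nat.cast_nonneg _
          have hexp := Real.add_one_le_exp (-(x * ((d m : ℝ) - 1 - 2 * r)))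
          nlinarith [mul_nonneg hch hαr.le]
      _ = x * ∑ m, ((2 : ℝ) ^ (d m - 1))⁻¹ * ∑ r ∈ Finset.range (d m),
          ((d m - 1).choose r : ℝ) * ((d m : ℝ) - 1 - 2 * r) * α m r := by
          rw [Finset.mul_sum]
          refine Finset.sum_congr rfl fun m _ => ?_
          rw [← Finset.mul_sum]
          ring
  have hψ0 : ψ 0 = 0 := by rw [hψ]; simp
  haveI : Nonempty {l : ℝ // 0 ≤ l} := ⟨⟨0, le_refl 0⟩⟩
  have hBdd : BddAbove (Set.range ψ) := ⟨C, by rintro _ ⟨x, rfl⟩; exact hbd x⟩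
  have hBdd2 : BddAbove (Set.range fun l : {l : ℝ // 0 ≤ l} => ψ (s * l.1)) :=
    ⟨C, by rintro _ ⟨l, rfl⟩; exact hbd _⟩
  apply le_antisymm
  · apply ciSup_le
    intro x
    have h0 : ψ (s * (0 : {l : ℝ // 0 ≤ l}).1) ≤
        ⨆ l : {l : ℝ // 0 ≤ l}, ψ (s * l.1) := le_ciSup hBdd2 _
    rcases lt_or_gt_of_ne hξ with hneg | hpos
    · have hs' : s = -1 := by rw [hs, Real.sign_of_neg hneg]
      rcases le_or_gt x 0 with hx | hx
      · have : ψ (s * (⟨-x, by linarith⟩ : {l : ℝ // 0 ≤ l}).1) ≤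
            ⨆ l : {l : ℝ // 0 ≤ l}, ψ (s * l.1) := le_ciSup hBdd2 _
        simpa [hs'] using this
      · have h1 : ψ x ≤ x * ξ := hkey x
        have h2 : x * ξ ≤ 0 := by nlinarith
        have h3 : ψ (s * (0 : {l : ℝ // 0 ≤ l}).1) = 0 := by
          simpa using hψ0
        linarith [h0, h3 ▸ h0]
    · have hs' : s = 1 := by rw [hs, Real.sign_of_pos hpos]
      rcases le_or_gt 0 x with hx | hx
      · have : ψ (s * (⟨x, hx⟩ : {l : ℝ // 0 ≤ l}).1) ≤
            ⨆ l : {l : ℝ // 0 ≤ l}, ψ (s * l.1) := le_ciSup hBdd2 _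
        simpa [hs'] using this
      · have h1 : ψ x ≤ x * ξ := hkey x
        have h2 : x * ξ ≤ 0 := by nlinarith
        have h3 : ψ (s * (0 : {l : ℝ // 0 ≤ l}).1) = 0 := by
          simpa using hψ0
        linarith [h3 ▸ h0]
  · apply ciSup_le
    intro l
    exact le_ciSup hBdd (s * l.1)
end

section
/- For even N, define w_in(N) := Σ_{m=1}^M Σ_{r=0}^{d_m−2} C(N/2 − 2, d_m−2−r) · C(N/2, r) · min( α^{(m)}_{(r, d_m−r)}·log N / C(N−1, d_m−1), 1 ). Then w_in(N) = Θ(log N / N) along even N: there exist constants 0 < c ≤ C and N₀ such that for all even N ≥ N₀, c·log N / N ≤ w_in(N) ≤ C·log N / N. -/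
open Finset

lemma aux_div_le {P Q n K : ℕ} (hQ : 0 < Q) (hn : 0 < n)
    (h : P * n ≤ K * Q) {a : ℝ} (ha : 0 ≤ a) :
    (P : ℝ) * (a / Q) ≤ (K : ℝ) * a / n := by
  rw [mul_div_assoc', div_le_div_iff₀ (by positivity) (by positivity)]
  calc (P:ℝ) * a * n = ((P * n : ℕ) : ℝ) * a := by push_cast; ring
    _ ≤ ((K * Q : ℕ) : ℝ) * a := mul_le_mul_of_nonneg_right (Nat.cast_le.2 h) ha
    _ = (K:ℝ) * a * Q := by push_cast; ring

lemma aux_div_ge {B Q n K : ℕ} (hQ : 0 < Q) (hn : 0 < n) (hK : 0 < K)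
    (h : Q ≤ K * B * n) {a : ℝ} (ha : 0 ≤ a) :
    a / ((K : ℝ) * n) ≤ (B : ℝ) * (a / Q) := by
  rw [mul_div_assoc', div_le_div_iff₀ (by positivity) (by positivity)]
  calc a * Q ≤ a * ((K * B * n : ℕ) : ℝ) := mul_le_mul_of_nonneg_left (Nat.cast_le.2 h) ha
    _ = (B:ℝ) * a * ((K:ℝ) * n) := by push_cast; ring

lemma aux_choose_le_pow (n k : ℕ) : n.choose k ≤ n ^ k :=
  (Nat.choose_le_descFactorial n k).trans (Nat.descFactorial_le_pow n k)

lemma aux_pow_le_choose (n k : ℕ) : (n + 1 - k) ^ k ≤ k.factorial * n.choose k := by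
  rw [← Nat.descFactorial_eq_factorial_mul_choose]
  exact Nat.pow_sub_le_descFactorial n k

/-- w_in(N) = Θ(log N / N) along even N. -/
theorem win_theta_logN_over_N
    (M : ℕ) (hM : 1 ≤ M) (d : Fin M → ℕ) (hd : ∀ m, 2 ≤ d m)
    (α : Fin M → ℕ → ℝ) (hα : ∀ m r, r ≤ d m → 0 < α m r)
    (hsym : ∀ m r, r ≤ d m → α m r = α m (d m - r))
    (win : ℕ → ℝ)
    (hwin : ∀ N, win N = ∑ m, ∑ r ∈ Finset.range (d m - 1),
      (((N / 2 - 2).choose (d m - 2 - r) * (N / 2).choose r : ℕ) : ℝ)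
        * min (α m r * Real.log N / (((N - 1).choose (d m - 1) : ℕ) : ℝ)) 1) :
    ∃ c C : ℝ, ∃ N₀ : ℕ, 0 < c ∧ c ≤ C ∧
      ∀ N : ℕ, N₀ ≤ N → Even N →
        c * Real.log N / N ≤ win N ∧ win N ≤ C * Real.log N / N := by
  have m0 : Fin M := ⟨0, hM⟩
  set d0 : ℕ := d m0 with hd0def
  have hd0 : 2 ≤ d0 := hd m0
  set α0 : ℝ := α m0 0 with hα0def
  have hα0 : 0 < α0 := hα m0 0 (by omega)
  set K : ℕ := 4 ^ (d0 - 2) * (d0 - 2).factorial with hKdef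
  have hKpos : 0 < K := by positivity
  set F : ℕ := (d0 - 1).factorial with hFdef
  have hFpos : 0 < F := (d0 - 1).factorial_pos
  set cL : ℝ := α0 / K with hcLdef
  have hcLpos : 0 < cL := div_pos hα0 (by exact_mod_cast hKpos)
  set cU : ℝ := ∑ m, ((2 * (d m - 1).factorial : ℕ) : ℝ) *
      ∑ r ∈ Finset.range (d m - 1), α m r with hcUdef
  have hcUpos : 0 < cU := by
    apply Finset.sum_pos _ ⟨m0, mem_univ m0⟩
    intro m _
    apply mul_pos
    · have : 0 < 2 * (d m - 1).factorial := by positivity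
      exact_mod_cast this
    · apply Finset.sum_pos
      · intro r hr
        exact hα m r (by simp only [mem_range] at hr; omega)
      · exact ⟨0, by simp only [mem_range]; have := hd m; omega⟩
  -- eventual smallness of log
  set ε : ℝ := 1 / (2 * F * α0) with hεdef
  have hεpos : 0 < ε := by positivity
  have hlog : ∀ᶠ N : ℕ in Filter.atTop, Real.log N ≤ ε * N := by
    have h1 : ∀ᶠ x : ℝ in Filter.atTop, ‖Real.log x‖ ≤ ε * ‖x‖ :=
      Real.isLittleO_log_id_atTop.def hεpos
    have h2 := (tendsto_natCast_atTop_atTop (R := ℝ)).eventually h1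
    filter_upwards [h2] with N h
    calc Real.log N ≤ ‖Real.log (N:ℝ)‖ := le_abs_self _
      _ ≤ ε * ‖(N:ℝ)‖ := h
      _ = ε * N := by rw [Real.norm_natCast]
  have hA : ∀ᶠ N : ℕ in Filter.atTop, ∀ m, 4 * d m + 8 ≤ N :=
    Filter.eventually_all.2 fun m => Filter.eventually_ge_atTop _
  obtain ⟨N₀, hN₀⟩ := Filter.eventually_atTop.1 (hA.and hlog)
  refine ⟨min cL cU, max cL cU, N₀, lt_min hcLpos hcUpos, min_le_of_left_le (le_max_left _ _), ?_⟩
  intro N hNge hNeven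
  obtain ⟨hAm, hlogN⟩ := hN₀ N hNge
  obtain ⟨u, hu⟩ := hNeven
  set t : ℕ := N / 2 with htdef
  have hNt : N = 2 * t := by omega
  have hd0N : 4 * d0 + 8 ≤ N := hAm m0
  have hN16 : 16 ≤ N := by omega
  have hNpos : (0:ℝ) < N := by exact_mod_cast (by omega : 0 < N)
  have hlognn : 0 ≤ Real.log N := Real.log_nonneg (by exact_mod_cast (by omega : 1 ≤ N))
  -- generic per-m facts
  have hQpos : ∀ m : Fin M, 0 < (N - 1).choose (d m - 1) := by
    intro m
    exact Nat.choose_pos (by have := hAm m; omega)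
  have hQlb : ∀ m : Fin M, t ^ (d m - 1) ≤ (d m - 1).factorial * (N - 1).choose (d m - 1) := by
    intro m
    have h1 : t ≤ N - 1 + 1 - (d m - 1) := by have := hAm m; have := hd m; omega
    calc t ^ (d m - 1) ≤ (N - 1 + 1 - (d m - 1)) ^ (d m - 1) :=
          Nat.pow_le_pow_left h1 _
      _ ≤ (d m - 1).factorial * (N - 1).choose (d m - 1) := aux_pow_le_choose _ _
  -- nonnegativity of each summand
  have hterm_nonneg : ∀ m : Fin M, ∀ r ∈ Finset.range (d m - 1),
      0 ≤ (((N / 2 - 2).choose (d m - 2 - r) * (N / 2).choose r : ℕ) : ℝ)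
        * min (α m r * Real.log N / (((N - 1).choose (d m - 1) : ℕ) : ℝ)) 1 := by
    intro m r hr
    apply mul_nonneg (Nat.cast_nonneg _)
    apply le_min _ zero_le_one
    apply div_nonneg _ (Nat.cast_nonneg _)
    exact mul_nonneg (hα m r (by simp only [mem_range] at hr; omega)).le hlognn
  constructor
  · -- LOWER BOUND
    set Q0 : ℕ := (N - 1).choose (d0 - 1) with hQ0def
    have hQ0pos : 0 < Q0 := hQpos m0
    set B : ℕ := (t - 2).choose (d0 - 2) with hBdef
    -- N ≤ 4 * (t - 1 - (d0 - 2)) and pow bound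
    have hNpow : N ^ (d0 - 2) ≤ K * B := by
      have hu4 : N ≤ 4 * (t - 2 + 1 - (d0 - 2)) := by omega
      calc N ^ (d0 - 2) ≤ (4 * (t - 2 + 1 - (d0 - 2))) ^ (d0 - 2) :=
            Nat.pow_le_pow_left hu4 _
        _ = 4 ^ (d0 - 2) * (t - 2 + 1 - (d0 - 2)) ^ (d0 - 2) := mul_pow _ _ _
        _ ≤ 4 ^ (d0 - 2) * ((d0 - 2).factorial * B) :=
            Nat.mul_le_mul_left _ (aux_pow_le_choose _ _)
        _ = K * B := by rw [hKdef]; ring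
    have hQub : Q0 ≤ K * B * N := by
      calc Q0 ≤ (N - 1) ^ (d0 - 1) := aux_choose_le_pow _ _
        _ ≤ N ^ (d0 - 1) := Nat.pow_le_pow_left (by omega) _
        _ = N ^ (d0 - 2) * N := by
            rw [← pow_succ]; congr 1; omega
        _ ≤ K * B * N := Nat.mul_le_mul_right _ hNpow
    -- the min equals its left argument for m0, r = 0
    have hx0 : α0 * Real.log N ≤ (Q0 : ℝ) := by
      have hNQ : (N : ℝ) ≤ 2 * F * Q0 := by
        have h2 : t ≤ F * Q0 :=
          le_trans (Nat.le_self_pow (by omega : d0 - 1 ≠ 0) t) (hQlb m0)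
        have h1 : N ≤ 2 * (F * Q0) := by omega
        have h1' : (N : ℝ) ≤ 2 * ((F : ℝ) * Q0) := by exact_mod_cast h1
        linarith
      calc α0 * Real.log N ≤ α0 * (ε * N) :=
            mul_le_mul_of_nonneg_left hlogN hα0.le
        _ = (N : ℝ) / (2 * F) := by
            rw [hεdef]; field_simp
        _ ≤ (Q0 : ℝ) := by
            rw [div_le_iff₀ (by positivity)]
            calc (N:ℝ) ≤ 2 * F * Q0 := hNQ
              _ = Q0 * (2 * F) := by ring
    have hminx : min (α0 * Real.log N / (Q0 : ℝ)) 1 = α0 * Real.log N / Q0 := by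
      apply min_eq_left
      rw [div_le_one (by exact_mod_cast hQ0pos)]
      exact hx0
    -- lower bound the full sum by the single (m0, 0) term
    rw [hwin]
    have hsingle : (((N / 2 - 2).choose (d0 - 2 - 0) * (N / 2).choose 0 : ℕ) : ℝ)
          * min (α m0 0 * Real.log N / ((N - 1).choose (d0 - 1) : ℝ)) 1
        ≤ ∑ m, ∑ r ∈ Finset.range (d m - 1),
          (((N / 2 - 2).choose (d m - 2 - r) * (N / 2).choose r : ℕ) : ℝ)
            * min (α m r * Real.log N / (((N - 1).choose (d m - 1) : ℕ) : ℝ)) 1 := by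
      calc _ ≤ ∑ r ∈ Finset.range (d0 - 1),
            (((N / 2 - 2).choose (d0 - 2 - r) * (N / 2).choose r : ℕ) : ℝ)
              * min (α m0 r * Real.log N / (((N - 1).choose (d0 - 1) : ℕ) : ℝ)) 1 := by
            apply Finset.single_le_sum (hterm_nonneg m0)
            simp only [mem_range]; omega
        _ ≤ _ := by
            apply Finset.single_le_sum (f := fun m => ∑ r ∈ Finset.range (d m - 1),
              (((N / 2 - 2).choose (d m - 2 - r) * (N / 2).choose r : ℕ) : ℝ)
                * min (α m r * Real.log N / (((N - 1).choose (d m - 1) : ℕ) : ℝ)) 1)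
              (fun m _ => Finset.sum_nonneg (hterm_nonneg m)) (mem_univ m0)
    refine le_trans ?_ hsingle
    have heq : (((N / 2 - 2).choose (d0 - 2 - 0) * (N / 2).choose 0 : ℕ) : ℝ)
          * min (α m0 0 * Real.log N / ((N - 1).choose (d0 - 1) : ℝ)) 1
        = (B : ℝ) * (α0 * Real.log N / (Q0 : ℝ)) := by
      simp only [Nat.sub_zero, Nat.choose_zero_right, mul_one, ← htdef, ← hα0def, ← hQ0def,
        ← hBdef, hminx]
    rw [heq]
    have hge := aux_div_ge hQ0pos (by omega : 0 < N) hKpos hQub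
      (a := α0 * Real.log N) (mul_nonneg hα0.le hlognn)
    refine le_trans ?_ hge
    have hrw : min cL cU * Real.log N / N ≤ cL * Real.log N / N := by
      gcongr
      exact min_le_left _ _
    refine hrw.trans (le_of_eq ?_)
    rw [hcLdef, div_mul_eq_mul_div, div_div]
  · -- UPPER BOUND
    rw [hwin]
    have hbound : ∀ m : Fin M, ∑ r ∈ Finset.range (d m - 1),
        (((N / 2 - 2).choose (d m - 2 - r) * (N / 2).choose r : ℕ) : ℝ)
          * min (α m r * Real.log N / (((N - 1).choose (d m - 1) : ℕ) : ℝ)) 1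
        ≤ (((2 * (d m - 1).factorial : ℕ) : ℝ) *
            ∑ r ∈ Finset.range (d m - 1), α m r) * Real.log N / N := by
      intro m
      have hQm : 0 < (N - 1).choose (d m - 1) := hQpos m
      have step : ∀ r ∈ Finset.range (d m - 1),
          (((N / 2 - 2).choose (d m - 2 - r) * (N / 2).choose r : ℕ) : ℝ)
            * min (α m r * Real.log N / (((N - 1).choose (d m - 1) : ℕ) : ℝ)) 1
          ≤ α m r * (((2 * (d m - 1).factorial : ℕ) : ℝ) * Real.log N / N) := by
        intro r hr
        simp only [mem_range] at hr
        have hPub : (t - 2).choose (d m - 2 - r) * t.choose r * N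
            ≤ 2 * (d m - 1).factorial * (N - 1).choose (d m - 1) := by
          have h1 : (t - 2).choose (d m - 2 - r) ≤ t ^ (d m - 2 - r) :=
            (Nat.choose_le_choose _ (by omega)).trans (aux_choose_le_pow t _)
          have h2 : t.choose r ≤ t ^ r := aux_choose_le_pow t r
          have h3 : (t - 2).choose (d m - 2 - r) * t.choose r ≤ t ^ (d m - 2) := by
            calc _ ≤ t ^ (d m - 2 - r) * t ^ r := Nat.mul_le_mul h1 h2
              _ = t ^ (d m - 2 - r + r) := (pow_add t _ _).symm
              _ = t ^ (d m - 2) := by congr 1; omega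
          calc (t - 2).choose (d m - 2 - r) * t.choose r * N
              ≤ t ^ (d m - 2) * (2 * t) := by rw [← hNt]; exact Nat.mul_le_mul_right _ h3
            _ = 2 * t ^ (d m - 1) := by
                rw [show d m - 1 = d m - 2 + 1 by have := hd m; omega, pow_succ]; ring
            _ ≤ 2 * ((d m - 1).factorial * (N - 1).choose (d m - 1)) :=
                Nat.mul_le_mul_left _ (hQlb m)
            _ = 2 * (d m - 1).factorial * (N - 1).choose (d m - 1) := by ring
        have hα_nn : 0 ≤ α m r * Real.log N :=
          mul_nonneg (hα m r (by omega)).le hlognn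
        calc (((N / 2 - 2).choose (d m - 2 - r) * (N / 2).choose r : ℕ) : ℝ)
              * min (α m r * Real.log N / (((N - 1).choose (d m - 1) : ℕ) : ℝ)) 1
            ≤ (((t - 2).choose (d m - 2 - r) * t.choose r : ℕ) : ℝ)
              * (α m r * Real.log N / (((N - 1).choose (d m - 1) : ℕ) : ℝ)) := by
              rw [← htdef]
              exact mul_le_mul_of_nonneg_left (min_le_left _ _) (Nat.cast_nonneg _)
          _ ≤ ((2 * (d m - 1).factorial : ℕ) : ℝ) * (α m r * Real.log N) / N := by
              have := aux_div_le hQm (by omega : 0 < N) hPub hα_nn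
              simpa using this
          _ = α m r * (((2 * (d m - 1).factorial : ℕ) : ℝ) * Real.log N / N) := by ring
      calc _ ≤ ∑ r ∈ Finset.range (d m - 1),
            α m r * (((2 * (d m - 1).factorial : ℕ) : ℝ) * Real.log N / N) :=
            Finset.sum_le_sum step
        _ = (∑ r ∈ Finset.range (d m - 1), α m r) *
            (((2 * (d m - 1).factorial : ℕ) : ℝ) * Real.log N / N) :=
            (Finset.sum_mul _ _ _).symm
        _ = (((2 * (d m - 1).factorial : ℕ) : ℝ) *
            ∑ r ∈ Finset.range (d m - 1), α m r) * Real.log N / N := by ring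
    calc _ ≤ ∑ m, (((2 * (d m - 1).factorial : ℕ) : ℝ) *
          ∑ r ∈ Finset.range (d m - 1), α m r) * Real.log N / N :=
          Finset.sum_le_sum fun m _ => hbound m
      _ = cU * Real.log N / N := by
          rw [hcUdef, ← Finset.sum_div, ← Finset.sum_mul]
      _ ≤ max cL cU * Real.log N / N := by
          gcongr
          exact le_max_right _ _
end

section
/- For each even N, let {Y_{N,m,r} : 1 ≤ m ≤ M, 0 ≤ r ≤ d_m−1} be mutually independent binomial random variables, where Y_{N,m,r} has parameters R_{N,m,r} := C(N/2 − 1, d_m−1−r)·C(N/2, r) and p_{N,m,r} := min( α^{(m)}_{(r, d_m−r)}·log N / C(N−1, d_m−1), 1 ). Let s = sgn(ξ) with ξ ≠ 0 and define D_N := s·Σ_{m=1}^M Σ_{r=0}^{d_m−1} (d_m−1−2r)·Y_{N,m,r}. Then E[D_N] / log N → |ξ| as N → ∞ along even N. -/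
open MeasureTheory ProbabilityTheory Finset Filter


-- generic linear ratio limit
lemma ratio_lim (a b c e : ℝ) (he : e ≠ 0) :
    Tendsto (fun n : ℕ => (c * n + a) / (e * n + b)) atTop (nhds (c / e)) := by
  have h0 : Tendsto (fun n : ℕ => (c + a * (n : ℝ)⁻¹) / (e + b * (n : ℝ)⁻¹)) atTop
      (nhds (c / e)) := by
    have hn := tendsto_inv_atTop_nhds_zero_nat (𝕜 := ℝ)
    have h1 : Tendsto (fun n : ℕ => c + a * (n : ℝ)⁻¹) atTop (nhds c) := by
      simpa using tendsto_const_nhds.add (hn.const_mul a)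
    have h2 : Tendsto (fun n : ℕ => e + b * (n : ℝ)⁻¹) atTop (nhds e) := by
      simpa using tendsto_const_nhds.add (hn.const_mul b)
    exact h1.div h2 he
  refine h0.congr' ?_
  filter_upwards [eventually_gt_atTop 0] with n hn
  have hn' : (n : ℝ) ≠ 0 := Nat.cast_ne_zero.2 hn.ne'
  have h1 : c + a * (n : ℝ)⁻¹ = (c * n + a) / n := by field_simp
  have h2 : e + b * (n : ℝ)⁻¹ = (e * n + b) / n := by field_simp
  rw [h1, h2]
  rcases eq_or_ne (e * n + b) 0 with h | h
  · simp [h]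
  · field_simp

-- L1: choose n k / n^k → 1/k!
lemma choose_div_pow_lim (k : ℕ) :
    Tendsto (fun n : ℕ => (n.choose k : ℝ) / (n : ℝ) ^ k) atTop
      (nhds ((k.factorial : ℝ)⁻¹)) := by
  have hfac : Tendsto (fun n : ℕ => (k.factorial : ℝ)⁻¹ * ∏ i ∈ range k, (((n : ℝ) - i) / n))
      atTop (nhds ((k.factorial : ℝ)⁻¹)) := by
    have hprod : Tendsto (fun n : ℕ => ∏ i ∈ range k, (((n : ℝ) - i) / n)) atTop (nhds 1) := by
      have := tendsto_finset_prod (range k)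
        (fun i _ => ?_ : ∀ i ∈ range k,
          Tendsto (fun n : ℕ => ((n : ℝ) - i) / n) atTop (nhds 1))
      · simpa using this
      · have := ratio_lim (-(i : ℝ)) 0 1 1 one_ne_zero
        simp only [one_mul, add_zero, div_one] at this
        simpa [sub_eq_add_neg, add_comm] using this
    simpa using tendsto_const_nhds.mul hprod
  refine hfac.congr' ?_
  filter_upwards [eventually_ge_atTop k, eventually_gt_atTop 0] with n hk hn
  have hn' : (n : ℝ) ≠ 0 := Nat.cast_ne_zero.2 hn.ne'
  have hdesc : (n.choose k : ℝ) * k.factorial = ∏ i ∈ range k, ((n : ℝ) - i) := by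
    have h1 : (n.descFactorial k : ℝ) = ∏ i ∈ range k, ((n : ℝ) - i) := by
      rw [Nat.descFactorial_eq_prod_range, Nat.cast_prod]
      refine Finset.prod_congr rfl fun i hi => ?_
      have : i ≤ n := le_trans (Nat.le_of_lt_succ (Nat.lt_succ_of_lt (mem_range.1 hi))) hk
      push_cast [Nat.cast_sub this]
      ring
    rw [← h1, Nat.descFactorial_eq_factorial_mul_choose]
    push_cast; ring
  have hpow : (n : ℝ) ^ k = ∏ i ∈ range k, (n : ℝ) := by simp
  rw [Finset.prod_div_distrib, ← hpow, ← hdesc]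
  have hfk : (k.factorial : ℝ) ≠ 0 := Nat.cast_ne_zero.2 k.factorial_ne_zero
  field_simp

lemma nat_affine_atTop (a b : ℕ) (ha : 1 ≤ a) : Tendsto (fun n : ℕ => a * n - b) atTop atTop :=
  tendsto_atTop_atTop.2 fun c => ⟨c + b, fun n hn => by have := Nat.le_mul_of_pos_left n (by omega : 0 < a); omega⟩

lemma tendsto_t_zero (k : ℕ) (hk : 1 ≤ k) (c : ℝ) :
    Tendsto (fun n : ℕ => c * Real.log (2 * n) / (((2 * n - 1).choose k : ℕ) : ℝ))
      atTop (nhds 0) := by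
  have h2n1 : Tendsto (fun n : ℕ => 2 * n - 1) atTop atTop := nat_affine_atTop 2 1 (by norm_num)
  have hC : Tendsto (fun n : ℕ => (((2*n-1).choose k : ℕ) : ℝ) / (((2*n-1 : ℕ)) : ℝ) ^ k)
      atTop (nhds ((k.factorial : ℝ)⁻¹)) := (choose_div_pow_lim k).comp h2n1
  have hCinv : Tendsto (fun n : ℕ => (((2*n-1 : ℕ)) : ℝ) ^ k / (((2*n-1).choose k : ℕ) : ℝ))
      atTop (nhds ((k.factorial : ℝ))) := by
    have := hC.inv₀ (by positivity)
    simpa [inv_div] using this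
  have hlogn : Tendsto (fun n : ℕ => Real.log (2 * n) / (n : ℝ)) atTop (nhds 0) := by
    have h1 : Tendsto (fun n : ℕ => Real.log (n : ℝ) / (n : ℝ)) atTop (nhds 0) :=
      (Real.isLittleO_log_id_atTop.tendsto_div_nhds_zero).comp tendsto_natCast_atTop_atTop
    have h2 : Tendsto (fun n : ℕ => Real.log 2 * (n : ℝ)⁻¹ + Real.log (n : ℝ) / (n : ℝ))
        atTop (nhds 0) := by
      simpa using (tendsto_inv_atTop_nhds_zero_nat.const_mul (Real.log 2)).add h1
    refine h2.congr' ?_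
    filter_upwards [eventually_gt_atTop 0] with n hn
    have hn' : (n : ℝ) ≠ 0 := Nat.cast_ne_zero.2 hn.ne'
    rw [Real.log_mul two_ne_zero hn']
    field_simp
  have hlog : Tendsto (fun n : ℕ => Real.log (2 * n) / (((2*n-1 : ℕ)) : ℝ) ^ k)
      atTop (nhds 0) := by
    refine squeeze_zero' ?_ ?_ hlogn
    · filter_upwards [eventually_ge_atTop 1] with n hn
      have : (1 : ℝ) ≤ 2 * n := by
        have : (1 : ℝ) ≤ (n : ℝ) := by exact_mod_cast hn
        linarith
      exact div_nonneg (Real.log_nonneg this) (by positivity)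
    · filter_upwards [eventually_ge_atTop 1] with n hn
      have hlg : 0 ≤ Real.log (2 * n) := Real.log_nonneg (by
        have : (1 : ℝ) ≤ (n : ℝ) := by exact_mod_cast hn
        linarith)
      have hle : (n : ℝ) ≤ (((2*n-1 : ℕ)) : ℝ) ^ k := by
        calc (n : ℝ) ≤ (((2*n-1 : ℕ)) : ℝ) := by
              exact_mod_cast Nat.cast_le.2 (by omega : n ≤ 2*n-1)
          _ ≤ (((2*n-1 : ℕ)) : ℝ) ^ k := le_self_pow₀
              (by exact_mod_cast Nat.one_le_cast.2 (by omega : 1 ≤ 2*n-1)) (by omega)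
      exact div_le_div_of_nonneg_left hlg (by exact_mod_cast hn) hle
  have hmain : Tendsto (fun n : ℕ =>
      c * (Real.log (2*n) / (((2*n-1 : ℕ)) : ℝ) ^ k)
        * ((((2*n-1 : ℕ)) : ℝ) ^ k / (((2*n-1).choose k : ℕ) : ℝ))) atTop (nhds 0) := by
    simpa using ((hlog.const_mul c).mul hCinv)
  refine hmain.congr' ?_
  filter_upwards [eventually_ge_atTop (k + 1)] with n hn
  have hpos : 0 < (2*n-1).choose k := Nat.choose_pos (by omega)
  have hc1 : (((2*n-1).choose k : ℕ) : ℝ) ≠ 0 := Nat.cast_ne_zero.2 hpos.ne'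
  have hp1 : ((((2*n-1 : ℕ)) : ℝ)) ≠ 0 := Nat.cast_ne_zero.2 (by omega)
  field_simp

lemma key_lim (d r : ℕ) (hd : 2 ≤ d) (hr : r < d) (c : ℝ) (hc : 0 < c) :
    Tendsto (fun n : ℕ =>
      (((n - 1).choose (d - 1 - r) * n.choose r : ℕ) : ℝ) *
        min (c * Real.log (2 * n) / (((2 * n - 1).choose (d - 1) : ℕ) : ℝ)) 1
        / Real.log (2 * n))
      atTop (nhds (c * ((d - 1).choose r : ℝ) / 2 ^ (d - 1))) := by
  set k := d - 1 with hkdef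
  set a := d - 1 - r with hadef
  have hk : 1 ≤ k := by omega
  have har : a + r = k := by omega
  have hsub1 : Tendsto (fun n : ℕ => n - 1) atTop atTop := by
    simpa using nat_affine_atTop 1 1 le_rfl
  have h2n1 : Tendsto (fun n : ℕ => 2 * n - 1) atTop atTop := nat_affine_atTop 2 1 (by norm_num)
  have hA : Tendsto (fun n : ℕ => (((n-1).choose a : ℕ) : ℝ) / (((n-1 : ℕ)) : ℝ) ^ a)
      atTop (nhds ((a.factorial : ℝ)⁻¹)) := (choose_div_pow_lim a).comp hsub1
  have hB := choose_div_pow_lim r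
  have hC : Tendsto (fun n : ℕ => (((2*n-1).choose k : ℕ) : ℝ) / (((2*n-1 : ℕ)) : ℝ) ^ k)
      atTop (nhds ((k.factorial : ℝ)⁻¹)) := (choose_div_pow_lim k).comp h2n1
  -- ratio limits
  have hq1 : Tendsto (fun n : ℕ => (((n-1 : ℕ)) : ℝ) / (((2*n-1 : ℕ)) : ℝ)) atTop
      (nhds (2⁻¹ : ℝ)) := by
    have := ratio_lim (-1) (-1) 1 2 two_ne_zero
    rw [show (1:ℝ)/2 = 2⁻¹ by norm_num] at this
    refine this.congr' ?_
    filter_upwards [eventually_ge_atTop 1] with n hn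
    rw [Nat.cast_sub hn, Nat.cast_sub (by omega : 1 ≤ 2*n)]
    push_cast; ring_nf
  have hq2 : Tendsto (fun n : ℕ => ((n : ℕ) : ℝ) / (((2*n-1 : ℕ)) : ℝ)) atTop
      (nhds (2⁻¹ : ℝ)) := by
    have := ratio_lim 0 (-1) 1 2 two_ne_zero
    rw [show (1:ℝ)/2 = 2⁻¹ by norm_num] at this
    refine this.congr' ?_
    filter_upwards [eventually_ge_atTop 1] with n hn
    rw [Nat.cast_sub (by omega : 1 ≤ 2*n)]
    push_cast; ring_nf
  have hP : Tendsto (fun n : ℕ =>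
      (((n-1 : ℕ)) : ℝ) ^ a * ((n : ℕ) : ℝ) ^ r / (((2*n-1 : ℕ)) : ℝ) ^ k) atTop
      (nhds ((2⁻¹ : ℝ) ^ a * (2⁻¹ : ℝ) ^ r)) := by
    have := (hq1.pow a).mul (hq2.pow r)
    refine this.congr' ?_
    filter_upwards [eventually_ge_atTop 1] with n hn
    have hz : (((2*n-1 : ℕ)) : ℝ) ≠ 0 := Nat.cast_ne_zero.2 (by omega)
    rw [← har, pow_add]
    rw [div_pow, div_pow]
    field_simp
  have ht := tendsto_t_zero k hk c
  -- main combination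
  have hmain : Tendsto (fun n : ℕ =>
      c * ((((n-1).choose a : ℕ) : ℝ) / (((n-1 : ℕ)) : ℝ) ^ a
        * (((n.choose r : ℕ)) : ℝ) / ((n : ℕ) : ℝ) ^ r
        / ((((2*n-1).choose k : ℕ) : ℝ) / (((2*n-1 : ℕ)) : ℝ) ^ k)
        * ((((n-1 : ℕ)) : ℝ) ^ a * ((n : ℕ) : ℝ) ^ r / (((2*n-1 : ℕ)) : ℝ) ^ k)))
      atTop (nhds (c * ((a.factorial : ℝ)⁻¹ * (r.factorial : ℝ)⁻¹
        / (k.factorial : ℝ)⁻¹ * ((2⁻¹ : ℝ) ^ a * (2⁻¹ : ℝ) ^ r)))) := by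
    have h1 : Tendsto (fun n : ℕ => (((n-1).choose a : ℕ) : ℝ) / (((n-1 : ℕ)) : ℝ) ^ a
        * (((n.choose r : ℕ)) : ℝ) / ((n : ℕ) : ℝ) ^ r) atTop
        (nhds ((a.factorial : ℝ)⁻¹ * (r.factorial : ℝ)⁻¹)) := by
      have := hA.mul hB
      refine this.congr (fun n => ?_)
      ring
    exact ((h1.div hC (by positivity)).mul hP).const_mul c
  have hval : c * ((a.factorial : ℝ)⁻¹ * (r.factorial : ℝ)⁻¹
        / (k.factorial : ℝ)⁻¹ * ((2⁻¹ : ℝ) ^ a * (2⁻¹ : ℝ) ^ r))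
      = c * ((k.choose r : ℝ)) / 2 ^ k := by
    have hch : (k.choose r * r.factorial * a.factorial : ℕ) = k.factorial := by
      have := Nat.choose_mul_factorial_mul_factorial (by omega : r ≤ k)
      rw [show k - r = a by omega] at this
      exact this
    have hch' : ((k.choose r : ℝ)) * (r.factorial : ℝ) * (a.factorial : ℝ)
        = (k.factorial : ℝ) := by exact_mod_cast congrArg (Nat.cast (R := ℝ)) hch
    have h2 : (2:ℝ) ^ a * (2:ℝ) ^ r = 2 ^ k := by rw [← pow_add, har]
    have hfa : (a.factorial : ℝ) ≠ 0 := by positivity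
    have hfr : (r.factorial : ℝ) ≠ 0 := by positivity
    have hfk : (k.factorial : ℝ) ≠ 0 := by positivity
    field_simp
    have h3a : (1/2:ℝ)^a * 2^a = 1 := by rw [← mul_pow]; norm_num
    have h3r : (1/2:ℝ)^r * 2^r = 1 := by rw [← mul_pow]; norm_num
    rw [← hch', ← h2]
    linear_combination ((k.choose r : ℝ) * (r.factorial : ℝ) * (a.factorial : ℝ) * ((1/2:ℝ)^r * 2^r)) * h3a + ((k.choose r : ℝ) * (r.factorial : ℝ) * (a.factorial : ℝ)) * h3r
  rw [hval] at hmain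
  refine hmain.congr' ?_
  have hev : ∀ᶠ n : ℕ in atTop,
      c * Real.log (2 * n) / (((2 * n - 1).choose k : ℕ) : ℝ) < 1 :=
    ht.eventually (eventually_lt_nhds zero_lt_one)
  filter_upwards [hev, eventually_ge_atTop (k + 2)] with n hmin hn
  have hlogpos : 0 < Real.log (2 * n) := Real.log_pos (by
    have : (1 : ℝ) ≤ (n : ℝ) := by exact_mod_cast (by omega : 1 ≤ n)
    linarith)
  have hchpos : 0 < (2*n-1).choose k := Nat.choose_pos (by omega)
  have hcc : (((2*n-1).choose k : ℕ) : ℝ) ≠ 0 := Nat.cast_ne_zero.2 hchpos.ne'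
  have hn1 : (((n-1 : ℕ)) : ℝ) ≠ 0 := Nat.cast_ne_zero.2 (by omega)
  have h2n : (((2*n-1 : ℕ)) : ℝ) ≠ 0 := Nat.cast_ne_zero.2 (by omega)
  have hnn : ((n : ℕ) : ℝ) ≠ 0 := Nat.cast_ne_zero.2 (by omega)
  rw [min_eq_left hmin.le]
  push_cast
  field_simp


lemma binom_mean (R : ℕ) (p : ℝ) :
    ∑ k ∈ range (R + 1), (k : ℝ) * ((R.choose k : ℝ) * p ^ k * (1 - p) ^ (R - k))
      = R * p := by
  rcases Nat.eq_zero_or_pos R with hR | hR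
  · subst hR; simp
  have hsum : ∀ j ∈ range R, ((j+1 : ℕ) : ℝ) * ((R.choose (j+1) : ℝ) * p ^ (j+1) * (1 - p) ^ (R - (j+1)))
      = (R : ℝ) * p * (((R-1).choose j : ℝ) * p ^ j * (1 - p) ^ ((R-1) - j)) := by
    intro j hj
    have hj' : j < R := mem_range.1 hj
    have hid : (j + 1) * R.choose (j + 1) = R * (R - 1).choose j := by
      have h := Nat.add_one_mul_choose_eq (R - 1) j
      rw [show R - 1 + 1 = R by omega] at h
      rw [h]; ring
    have hid' : ((j:ℝ) + 1) * (R.choose (j+1) : ℝ) = (R : ℝ) * ((R-1).choose j : ℝ) := by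
      exact_mod_cast congrArg (Nat.cast (R := ℝ)) hid
    have hee : R - (j + 1) = (R - 1) - j := by omega
    rw [hee]
    push_cast
    linear_combination (p ^ (j + 1) * (1 - p) ^ (R - 1 - j)) * hid'
  calc ∑ k ∈ range (R + 1), (k : ℝ) * ((R.choose k : ℝ) * p ^ k * (1 - p) ^ (R - k))
      = ∑ j ∈ range R, ((j+1 : ℕ) : ℝ) * ((R.choose (j+1) : ℝ) * p ^ (j+1) * (1 - p) ^ (R - (j+1))) := by
        rw [Finset.sum_range_succ'] ; simp
    _ = ∑ j ∈ range R, (R : ℝ) * p * (((R-1).choose j : ℝ) * p ^ j * (1 - p) ^ ((R-1) - j)) :=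
        Finset.sum_congr rfl hsum
    _ = (R : ℝ) * p * ∑ j ∈ range R, (((R-1).choose j : ℝ) * p ^ j * (1 - p) ^ ((R-1) - j)) := by
        rw [Finset.mul_sum]
    _ = (R : ℝ) * p := by
        have h1 := add_pow p (1 - p) (R - 1)
        rw [show p + (1 - p) = 1 by ring, one_pow, show R - 1 + 1 = R by omega] at h1
        have h2 : ∑ j ∈ range R, (((R-1).choose j : ℝ) * p ^ j * (1 - p) ^ ((R-1) - j)) = 1 := by
          refine Eq.trans ?_ h1.symm
          exact Finset.sum_congr rfl fun j _ => by ring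
        rw [h2, mul_one]

lemma binom_integral {Ωt : Type*} [MeasurableSpace Ωt] (μ : Measure Ωt) [IsProbabilityMeasure μ]
    (Y : Ωt → ℕ) (hY : Measurable Y) (R : ℕ) (p : ℝ) (hp0 : 0 ≤ p) (hp1 : p ≤ 1)
    (hdist : ∀ k, μ {ω | Y ω = k}
      = ENNReal.ofReal ((R.choose k : ℝ) * p ^ k * (1 - p) ^ (R - k))) :
    Integrable (fun ω => (Y ω : ℝ)) μ ∧ ∫ ω, (Y ω : ℝ) ∂μ = R * p := by
  have hq : (0:ℝ) ≤ 1 - p := by linarith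
  have hnn : ∀ k, 0 ≤ (R.choose k : ℝ) * p ^ k * (1 - p) ^ (R - k) := fun k => by positivity
  have hms : ∀ k : ℕ, MeasurableSet {ω | Y ω = k} := fun k => hY (MeasurableSet.singleton k)
  have hsum1 : ∑ k ∈ range (R + 1), (R.choose k : ℝ) * p ^ k * (1 - p) ^ (R - k) = 1 := by
    have h1 := add_pow p (1 - p) R
    rw [show p + (1 - p) = 1 by ring, one_pow] at h1
    refine Eq.trans ?_ h1.symm
    exact Finset.sum_congr rfl fun j _ => by ring
  have hA : μ {ω | Y ω ≤ R} = 1 := by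
    have hU : {ω | Y ω ≤ R} = ⋃ k ∈ range (R + 1), {ω | Y ω = k} := by
      ext ω; simp [Nat.lt_succ_iff]
    rw [hU, measure_biUnion_finset ?_ (fun k _ => hms k)]
    · rw [Finset.sum_congr rfl (fun k _ => hdist k),
        ← ENNReal.ofReal_sum_of_nonneg (fun k _ => hnn k), hsum1, ENNReal.ofReal_one]
    · intro i _ j hj hij
      simp only [Function.onFun, Set.disjoint_left]
      intro ω h1 h2
      exact hij (h1.symm.trans h2)
  have hae : ∀ᵐ ω ∂μ, Y ω ≤ R := by
    have hc : μ {ω | Y ω ≤ R}ᶜ = 0 := by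
      rw [measure_compl (by exact (measurableSet_le (hY.comp measurable_id) measurable_const : MeasurableSet _)) (measure_ne_top μ _), hA, measure_univ]
      simp
    rw [ae_iff]
    convert hc using 2
    rfl
  set g : Ωt → ℝ := fun ω => ∑ k ∈ range (R + 1),
    (k : ℝ) * Set.indicator {ω | Y ω = k} (fun _ => 1) ω with hg
  have hgeq : (fun ω => (Y ω : ℝ)) =ᵐ[μ] g := by
    filter_upwards [hae] with ω hω
    rw [hg]
    simp only [Set.indicator_apply, Set.mem_setOf_eq, mul_ite, mul_one, mul_zero]
    rw [Finset.sum_ite_eq (range (R+1)) (Y ω) (fun k => (k : ℝ))]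
    simp [Nat.lt_succ_iff, hω]
  have hterm : ∀ k : ℕ, Integrable (fun ω => (k : ℝ) *
      Set.indicator {ω | Y ω = k} (fun _ => (1:ℝ)) ω) μ := by
    intro k
    exact (((integrable_const (1:ℝ)).indicator (hms k)).const_mul _)
  have hgint : Integrable g μ := by
    rw [hg]; exact integrable_finset_sum _ (fun k _ => hterm k)
  have hint : Integrable (fun ω => (Y ω : ℝ)) μ := hgint.congr hgeq.symm
  refine ⟨hint, ?_⟩
  rw [integral_congr_ae hgeq, hg, integral_finset_sum _ (fun k _ => hterm k)]
  have hik : ∀ k : ℕ, ∫ ω, (k : ℝ) * Set.indicator {ω | Y ω = k} (fun _ => (1:ℝ)) ω ∂μ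
      = (k : ℝ) * ((R.choose k : ℝ) * p ^ k * (1 - p) ^ (R - k)) := by
    intro k
    rw [integral_const_mul, integral_indicator_const (1:ℝ) (hms k), measureReal_def, hdist k]
    rw [ENNReal.toReal_ofReal (hnn k)]
    simp
  rw [Finset.sum_congr rfl (fun k _ => hik k)]
  exact binom_mean R p

/-- E[D_N] / log N → |ξ| along even N, where
D_N = s·Σ_m Σ_{r<d_m} (d_m−1−2r)·Y_{N,m,r}, the Y's being independent binomials
with parameters R_{N,m,r} = C(N/2−1, d_m−1−r)·C(N/2, r) and
p_{N,m,r} = min(α^{(m)}_r log N / C(N−1, d_m−1), 1), and s = sgn(ξ), ξ ≠ 0. -/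
theorem expectation_diagonal_asymptotics
    (M : ℕ) (hM : 1 ≤ M) (d : Fin M → ℕ) (hd : ∀ m, 2 ≤ d m)
    (α : Fin M → ℕ → ℝ) (hα : ∀ m r, r ≤ d m → 0 < α m r)
    (hsym : ∀ m r, r ≤ d m → α m r = α m (d m - r))
    (ξ : ℝ)
    (hξdef : ξ = ∑ m, ((2 : ℝ) ^ (d m - 1))⁻¹ * ∑ r ∈ Finset.range (d m),
      ((d m - 1).choose r : ℝ) * ((d m : ℝ) - 1 - 2 * r) * α m r)
    (hξ : ξ ≠ 0) (s : ℝ) (hs : s = Real.sign ξ)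
    (Ω : ℕ → Type) (mΩ : ∀ N, MeasurableSpace (Ω N))
    (μ : ∀ N, Measure (Ω N)) (hprob : ∀ N, IsProbabilityMeasure (μ N))
    (Y : ∀ N, Fin M → ℕ → Ω N → ℕ)
    (hmeas : ∀ N m r, Measurable (Y N m r))
    (hdist : ∀ N : ℕ, Even N → ∀ m : Fin M, ∀ r < d m, ∀ k : ℕ,
      μ N {ω | Y N m r ω = k}
        = ENNReal.ofReal
            ((((N / 2 - 1).choose (d m - 1 - r) * (N / 2).choose r).choose k : ℝ)
              * (min (α m r * Real.log N / (((N - 1).choose (d m - 1) : ℕ) : ℝ)) 1) ^ k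
              * (1 - min (α m r * Real.log N / (((N - 1).choose (d m - 1) : ℕ) : ℝ)) 1)
                  ^ ((N / 2 - 1).choose (d m - 1 - r) * (N / 2).choose r - k)))
    (hindep : ∀ N : ℕ, Even N →
      iIndepFun
        (fun q : {q : Fin M × ℕ // q.2 < d q.1} => Y N q.1.1 q.1.2) (μ N)) :
    Tendsto
      (fun N : ℕ =>
        (∫ ω, s * ∑ m, ∑ r ∈ Finset.range (d m),
            ((d m : ℝ) - 1 - 2 * r) * (Y N m r ω : ℝ) ∂ (μ N)) / Real.log N)
      (atTop ⊓ Filter.principal {N : ℕ | Even N})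
      (nhds |ξ|) := by
  have hI := fun N => hprob N
  set pp : ℕ → Fin M → ℕ → ℝ := fun N m r =>
    min (α m r * Real.log N / (((N - 1).choose (d m - 1) : ℕ) : ℝ)) 1 with hpp
  set Rf : ℕ → Fin M → ℕ → ℕ := fun N m r =>
    (N / 2 - 1).choose (d m - 1 - r) * (N / 2).choose r with hRf
  have hint : ∀ N : ℕ, Even N → ∀ m : Fin M, ∀ r, r < d m →
      Integrable (fun ω => (Y N m r ω : ℝ)) (μ N) ∧
        ∫ ω, (Y N m r ω : ℝ) ∂(μ N) = (Rf N m r : ℝ) * pp N m r := by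
    intro N hN m r hr
    refine binom_integral (μ N) (Y N m r) (hmeas N m r) (Rf N m r) (pp N m r) ?_ ?_ ?_
    · exact le_min (div_nonneg (mul_nonneg (hα m r hr.le).le (Real.log_natCast_nonneg N))
        (Nat.cast_nonneg _)) zero_le_one
    · exact min_le_right _ _
    · exact hdist N hN m r hr
  -- value of the integral for even N
  have hEint : ∀ N : ℕ, Even N →
      (∫ ω, s * ∑ m, ∑ r ∈ Finset.range (d m),
          ((d m : ℝ) - 1 - 2 * r) * (Y N m r ω : ℝ) ∂ (μ N))
      = s * ∑ m, ∑ r ∈ Finset.range (d m),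
          ((d m : ℝ) - 1 - 2 * r) * ((Rf N m r : ℝ) * pp N m r) := by
    intro N hN
    rw [integral_const_mul]
    rw [integral_finset_sum _ (fun m _ => integrable_finset_sum _
      (fun r hr => ((hint N hN m r (mem_range.1 hr)).1.const_mul _)))]
    congr 1
    refine Finset.sum_congr rfl fun m _ => ?_
    rw [integral_finset_sum _ (fun r hr => ((hint N hN m r (mem_range.1 hr)).1.const_mul _))]
    refine Finset.sum_congr rfl fun r hr => ?_
    rw [integral_const_mul, (hint N hN m r (mem_range.1 hr)).2]
  -- the deterministic function
  set g : ℕ → ℝ := fun N =>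
    s * ∑ m, ∑ r ∈ Finset.range (d m),
      ((d m : ℝ) - 1 - 2 * r) * ((Rf N m r : ℝ) * pp N m r) / Real.log N with hgdef
  -- limit of g along doubled indices
  have hG : Tendsto (fun n : ℕ => g (2 * n)) atTop (nhds |ξ|) := by
    have hterm : ∀ m : Fin M, ∀ r ∈ Finset.range (d m),
        Tendsto (fun n : ℕ =>
          ((d m : ℝ) - 1 - 2 * r) * ((Rf (2 * n) m r : ℝ) * pp (2 * n) m r) / Real.log (2 * n))
          atTop (nhds (((d m : ℝ) - 1 - 2 * r) *
            (α m r * (((d m - 1).choose r : ℝ)) / 2 ^ (d m - 1)))) := by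
      intro m r hr
      have hr' : r < d m := mem_range.1 hr
      have hk := key_lim (d m) r (hd m) hr' (α m r) (hα m r hr'.le)
      have := hk.const_mul ((d m : ℝ) - 1 - 2 * r)
      refine this.congr (fun n => ?_)
      simp only [hpp, hRf]
      rw [Nat.mul_div_cancel_left n (by norm_num : 0 < 2)]
      push_cast
      ring
    have hsum : Tendsto (fun n : ℕ => ∑ m, ∑ r ∈ Finset.range (d m),
        ((d m : ℝ) - 1 - 2 * r) * ((Rf (2 * n) m r : ℝ) * pp (2 * n) m r) / Real.log (2 * n))
        atTop (nhds (∑ m, ∑ r ∈ Finset.range (d m), ((d m : ℝ) - 1 - 2 * r) *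
          (α m r * (((d m - 1).choose r : ℝ)) / 2 ^ (d m - 1)))) := by
      exact tendsto_finset_sum _ (fun m _ => tendsto_finset_sum _ (hterm m))
    have hfin := hsum.const_mul s
    have hval : s * (∑ m, ∑ r ∈ Finset.range (d m), ((d m : ℝ) - 1 - 2 * r) *
        (α m r * (((d m - 1).choose r : ℝ)) / 2 ^ (d m - 1))) = |ξ| := by
      have h1 : (∑ m, ∑ r ∈ Finset.range (d m), ((d m : ℝ) - 1 - 2 * r) *
          (α m r * (((d m - 1).choose r : ℝ)) / 2 ^ (d m - 1))) = ξ := by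
        rw [hξdef]
        refine Finset.sum_congr rfl fun m _ => ?_
        rw [Finset.mul_sum]
        refine Finset.sum_congr rfl fun r _ => ?_
        have h2 : ((2:ℝ) ^ (d m - 1)) ≠ 0 := by positivity
        field_simp
      rw [h1, hs]
      rcases lt_or_gt_of_ne hξ with h | h
      · rw [Real.sign_of_neg h, abs_of_neg h]; ring
      · rw [Real.sign_of_pos h, abs_of_pos h, one_mul]
    rw [← hval]
    refine hfin.congr (fun n => ?_)
    rw [hgdef]
    push_cast
    rfl
  have htend2 : Tendsto (fun N : ℕ => N / 2) (atTop ⊓ Filter.principal {N : ℕ | Even N}) atTop :=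
    (tendsto_atTop_atTop.2 fun b => ⟨2 * b, fun n hn => by omega⟩).mono_left inf_le_left
  have hev : ∀ᶠ N : ℕ in (atTop ⊓ Filter.principal {N : ℕ | Even N}),
      (∫ ω, s * ∑ m, ∑ r ∈ Finset.range (d m),
          ((d m : ℝ) - 1 - 2 * r) * (Y N m r ω : ℝ) ∂ (μ N)) / Real.log N
        = g (2 * (N / 2)) := by
    rw [eventually_inf_principal]
    filter_upwards with N hN
    have h2 : 2 * (N / 2) = N := by rw [mul_comm]; exact Nat.div_two_mul_two_of_even hN
    rw [h2, hEint N hN, hgdef, mul_div_assoc]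
    congr 1
    simp only [Finset.sum_div]
  exact Tendsto.congr' (f₁ := fun N : ℕ => g (2 * (N / 2))) (Filter.EventuallyEq.symm hev) (hG.comp htend2)
end

section
/- For each even N, let {Y_{N,m,r} : 1 ≤ m ≤ M, 0 ≤ r ≤ d_m−1} be mutually independent binomial random variables, where Y_{N,m,r} has parameters R_{N,m,r} := C(N/2 − 1, d_m−1−r)·C(N/2, r) and p_{N,m,r} := min( α^{(m)}_{(r, d_m−r)}·log N / C(N−1, d_m−1), 1 ). Let s = sgn(ξ) with ξ ≠ 0 and define D_N := s·Σ_{m=1}^M Σ_{r=0}^{d_m−1} (d_m−1−2r)·Y_{N,m,r}. If I > 1, then there exists a constant ε > 0 (depending only on M, (d_m) and the α's) such that N · P( D_N ≤ ε·log N ) → 0 as N → ∞ along even N. -/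
open MeasureTheory ProbabilityTheory Finset Filter

lemma aux_tendsto_descFactorial (c k : ℕ) :
    Tendsto (fun n : ℕ => (((n - c).descFactorial k : ℕ) : ℝ) / (n : ℝ) ^ k) atTop
      (nhds 1) := by
  have h : Tendsto (fun n : ℕ => ∏ i ∈ Finset.range k, (1 - ((c + i : ℕ) : ℝ) / n)) atTop
      (nhds (∏ i ∈ Finset.range k, (1 : ℝ))) := by
    refine tendsto_finset_prod _ (fun i _ => ?_)
    have : Tendsto (fun n : ℕ => ((c + i : ℕ) : ℝ) / n) atTop (nhds 0) :=
      tendsto_const_nhds.div_atTop tendsto_natCast_atTop_atTop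
    simpa using tendsto_const_nhds.sub this
  rw [show (1 : ℝ) = ∏ i ∈ Finset.range k, (1:ℝ) by simp]
  refine Tendsto.congr' ?_ h
  filter_upwards [eventually_ge_atTop (c + k + 1)] with n hn
  rw [Nat.descFactorial_eq_prod_range]
  have hn0 : (n : ℝ) ≠ 0 := by
    have : 0 < n := by omega
    positivity
  rw [Nat.cast_prod, show ((n:ℝ))^k = ∏ _i ∈ Finset.range k, (n:ℝ) by
      rw [Finset.prod_const, Finset.card_range],
    ← Finset.prod_div_distrib]
  refine Finset.prod_congr rfl (fun i hi => ?_)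
  have hle : c + i ≤ n := by
    have := Finset.mem_range.mp hi; omega
  rw [Nat.sub_sub, Nat.cast_sub hle]
  push_cast
  field_simp

lemma aux_tendsto_choose (c k : ℕ) :
    Tendsto (fun n : ℕ => (((n - c).choose k : ℕ) : ℝ) / (n : ℝ) ^ k) atTop
      (nhds (1 / (k.factorial : ℝ))) := by
  have h := (aux_tendsto_descFactorial c k).div_const (k.factorial : ℝ)
  rw [one_div]  -- goal shape?
  refine Tendsto.congr ?_ (by simpa [one_div] using h)
  intro n
  have : ((n - c).descFactorial k : ℝ) = (k.factorial : ℝ) * ((n - c).choose k : ℝ) := by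
    rw [← Nat.cast_mul, Nat.descFactorial_eq_factorial_mul_choose]
  have hk : (k.factorial : ℝ) ≠ 0 := by positivity
  rw [this, div_div, mul_comm ((n:ℝ)^k), mul_div_mul_left _ _ hk]


lemma aux_integral {Ω : Type} [MeasurableSpace Ω] (μ : Measure Ω) [IsProbabilityMeasure μ]
    (Y : Ω → ℕ) (hY : Measurable Y) (R : ℕ) (w : ℕ → ℝ) (hw0 : ∀ k, 0 ≤ w k)
    (hdist : ∀ k, μ {ω | Y ω = k} = ENNReal.ofReal (w k))
    (hzero : ∀ k, R < k → w k = 0) (g : ℕ → ℝ) :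
    ∫ ω, g (Y ω) ∂μ = ∑ k ∈ Finset.range (R + 1), g k * w k := by
  have hms : ∀ k : ℕ, MeasurableSet {ω | Y ω = k} := fun k =>
    hY (measurableSet_singleton k)
  have hnull : μ {ω | R < Y ω} = 0 := by
    have hset : {ω | R < Y ω} = ⋃ k : ℕ, {ω | Y ω = R + 1 + k} := by
      ext ω; simp only [Set.mem_setOf_eq, Set.mem_iUnion]
      constructor
      · intro h; exact ⟨Y ω - R - 1, by omega⟩
      · rintro ⟨k, hk⟩; omega
    rw [hset]
    refine measure_iUnion_null (fun k => ?_)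
    rw [hdist, hzero _ (by omega), ENNReal.ofReal_zero]
  have hae : ∀ᵐ ω ∂μ, Y ω ≤ R := by
    rw [ae_iff]
    simpa [not_le] using hnull
  have hcongr : (fun ω => g (Y ω)) =ᵐ[μ]
      (fun ω => ∑ k ∈ Finset.range (R + 1),
        Set.indicator {ω' | Y ω' = k} (fun _ => g k) ω) := by
    filter_upwards [hae] with ω hω
    rw [Finset.sum_congr rfl (fun k _ => Set.indicator_apply _ _ _)]
    simp only [Set.mem_setOf_eq]
    rw [Finset.sum_ite_eq (Finset.range (R + 1)) (Y ω) g,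
      if_pos (Finset.mem_range.mpr (by omega))]
  rw [integral_congr_ae hcongr, integral_finset_sum]
  · refine Finset.sum_congr rfl (fun k _ => ?_)
    rw [integral_indicator_const _ (hms k), measureReal_def, hdist, ENNReal.toReal_ofReal (hw0 k), smul_eq_mul,
      mul_comm]
  · exact fun k _ => (integrable_const (g k)).indicator (hms k)

lemma aux_mgf_binom {Ω : Type} [MeasurableSpace Ω] (μ : Measure Ω) [IsProbabilityMeasure μ]
    (Y : Ω → ℕ) (hY : Measurable Y) (R : ℕ) (p : ℝ) (hp0 : 0 ≤ p) (hp1 : p ≤ 1)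
    (hdist : ∀ k, μ {ω | Y ω = k}
      = ENNReal.ofReal ((R.choose k : ℝ) * p ^ k * (1 - p) ^ (R - k))) (c : ℝ) :
    ∫ ω, Real.exp (c * (Y ω : ℝ)) ∂μ = (1 - p + p * Real.exp c) ^ R := by
  have h := aux_integral μ Y hY R (fun k => (R.choose k : ℝ) * p ^ k * (1 - p) ^ (R - k))
    (fun k => by
      show (0:ℝ) ≤ (R.choose k : ℝ) * p ^ k * (1 - p) ^ (R - k)
      have h1 : (0:ℝ) ≤ 1 - p := by linarith
      positivity)
    hdist
    (fun k hk => by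
      show ((R.choose k : ℕ) : ℝ) * p ^ k * (1 - p) ^ (R - k) = 0
      rw [Nat.choose_eq_zero_of_lt hk]; simp)
    (fun k => Real.exp (c * (k : ℝ)))
  rw [h, show (1 : ℝ) - p + p * Real.exp c = p * Real.exp c + (1 - p) by ring, add_pow]
  refine Finset.sum_congr rfl (fun k _ => ?_)
  rw [mul_pow, mul_comm c (k : ℝ), Real.exp_nat_mul]
  ring

@[to_additive]
lemma aux_prod_T {M : ℕ} (d : Fin M → ℕ) {β : Type*} [CommMonoid β] (f : Fin M → ℕ → β) :
    ∏ q ∈ (Finset.univ ×ˢ Finset.range (Finset.univ.sup d)).subtype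
        (fun q : Fin M × ℕ => q.2 < d q.1), f q.1.1 q.1.2
      = ∏ m, ∏ r ∈ Finset.range (d m), f m r := by
  rw [Finset.prod_subtype_eq_prod_filter (fun a : Fin M × ℕ => f a.1 a.2)]
  rw [Finset.prod_filter, Finset.prod_product]
  refine Finset.prod_congr rfl (fun m _ => ?_)
  rw [← Finset.prod_filter]
  refine Finset.prod_congr ?_ (fun r _ => rfl)
  ext r
  simp only [Finset.mem_filter, Finset.mem_range]
  constructor
  · rintro ⟨_, h⟩; exact h
  · intro h
    exact ⟨lt_of_lt_of_le h (Finset.le_sup (Finset.mem_univ m)), h⟩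
lemma aux_tendsto_ratio (e r : ℕ) (hr : r ≤ e) :
    Tendsto (fun n : ℕ => (((n - 1).choose (e - r) * n.choose r : ℕ) : ℝ)
        / (((2 * n - 1).choose e : ℕ) : ℝ)) atTop
      (nhds ((e.choose r : ℝ) / 2 ^ e)) := by
  have hA := aux_tendsto_choose 1 (e - r)
  have hB := aux_tendsto_choose 0 r
  have hB' : Tendsto (fun n : ℕ => ((n.choose r : ℕ) : ℝ) / (n : ℝ) ^ r) atTop
      (nhds (1 / (r.factorial : ℝ))) := by simpa using hB
  -- denominator over n^e
  have h2n : Tendsto (fun n : ℕ => 2 * n) atTop atTop :=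
    tendsto_atTop_atTop_of_monotone (fun a b h => by omega) (fun b => ⟨b, by omega⟩)
  have hCraw := (aux_tendsto_choose 1 e).comp h2n
  have hC : Tendsto (fun n : ℕ => (((2 * n - 1).choose e : ℕ) : ℝ) / (n : ℝ) ^ e) atTop
      (nhds ((2 : ℝ) ^ e / (e.factorial : ℝ))) := by
    have := hCraw.mul_const ((2:ℝ)^e)
    refine Tendsto.congr' ?_ (by convert this using 2; ring)
    filter_upwards [eventually_ge_atTop 1] with n hn
    have hn0 : (n : ℝ) ≠ 0 := by have : 0 < n := hn; positivity
    show (((2*n-1).choose e : ℕ) : ℝ) / ((2*n : ℕ) : ℝ) ^ e * (2:ℝ)^e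
        = (((2*n-1).choose e : ℕ) : ℝ) / (n:ℝ)^e
    push_cast
    rw [mul_pow]
    field_simp
  -- combine
  have hAB : Tendsto (fun n : ℕ => ((((n-1).choose (e-r) : ℕ) : ℝ) / (n:ℝ)^(e-r))
      * (((n.choose r : ℕ) : ℝ) / (n:ℝ)^r)) atTop
      (nhds (1 / ((e-r).factorial : ℝ) * (1 / (r.factorial : ℝ)))) := hA.mul hB'
  have hden_ne : ((2:ℝ)^e / (e.factorial : ℝ)) ≠ 0 := by positivity
  have hdiv := hAB.div hC hden_ne
  have hlim : (1 / ((e-r).factorial : ℝ) * (1 / (r.factorial : ℝ))) / ((2:ℝ)^e / (e.factorial : ℝ))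
      = (e.choose r : ℝ) / 2 ^ e := by
    have key : ((e.choose r : ℕ) : ℝ) * (r.factorial : ℝ) * ((e - r).factorial : ℝ)
        = (e.factorial : ℝ) := by
      rw [← Nat.cast_mul, ← Nat.cast_mul, Nat.choose_mul_factorial_mul_factorial hr]
    have h1 : ((e-r).factorial : ℝ) ≠ 0 := by positivity
    have h2 : ((r).factorial : ℝ) ≠ 0 := by positivity
    have h3 : ((e).factorial : ℝ) ≠ 0 := by positivity
    field_simp
    linear_combination (-1:ℝ) * key
  rw [← hlim]
  refine Tendsto.congr' ?_ hdiv
  filter_upwards [eventually_ge_atTop (e + 1)] with n hn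
  have hn0 : (n : ℝ) ≠ 0 := Nat.cast_ne_zero.mpr (by omega)
  have hZ : (((2*n-1).choose e : ℕ) : ℝ) ≠ 0 :=
    Nat.cast_ne_zero.mpr (Nat.choose_pos (by omega)).ne'
  have hne : (n:ℝ)^e ≠ 0 := pow_ne_zero _ hn0
  have hpow : (n:ℝ)^(e-r) * (n:ℝ)^r = (n:ℝ)^e := by
    rw [← pow_add, Nat.sub_add_cancel hr]
  simp only [Pi.div_apply]
  rw [div_mul_div_comm, hpow]
  push_cast
  field_simp


lemma aux_alg (a X L Z : ℝ) (hL : L ≠ 0) : X * (a * L / Z) / L = a * (X / Z) := by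
  rcases eq_or_ne Z 0 with h | h
  · simp [h]
  · field_simp

lemma aux_alg2 (L P Z : ℝ) (hP : P ≠ 0) : (L / P) / (Z / P) = L / Z := by
  rcases eq_or_ne Z 0 with h | h
  · simp [h]
  · field_simp

lemma aux_two_n : Tendsto (fun n : ℕ => 2 * n) atTop atTop :=
  tendsto_atTop_atTop_of_monotone (fun a b h => by omega) (fun b => ⟨b, by omega⟩)

lemma aux_log_div_choose (e : ℕ) (he : 1 ≤ e) :
    Tendsto (fun n : ℕ => Real.log ((2 * n : ℕ) : ℝ) / (((2 * n - 1).choose e : ℕ) : ℝ))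
      atTop (nhds 0) := by
  have h2n : Tendsto (fun n : ℕ => ((2 * n : ℕ) : ℝ)) atTop atTop :=
    tendsto_natCast_atTop_atTop.comp aux_two_n
  have hlx : Tendsto (fun x : ℝ => Real.log x / x ^ e) atTop (nhds 0) := by
    have h1 : (0:ℝ) < (e:ℝ) := by exact_mod_cast he
    have h0 := (isLittleO_log_rpow_atTop h1).tendsto_div_nhds_zero
    refine h0.congr' ?_
    filter_upwards [eventually_ge_atTop (0:ℝ)] with x hx
    rw [Real.rpow_natCast]
  have hnum : Tendsto (fun n : ℕ => Real.log ((2 * n : ℕ) : ℝ) / ((2 * n : ℕ) : ℝ) ^ e)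
      atTop (nhds 0) := hlx.comp h2n
  have hC : Tendsto (fun n : ℕ => (((2 * n - 1).choose e : ℕ) : ℝ) / ((2 * n : ℕ) : ℝ) ^ e)
      atTop (nhds (1 / (e.factorial : ℝ))) := (aux_tendsto_choose 1 e).comp aux_two_n
  have hne : (1 / (e.factorial : ℝ)) ≠ 0 := by positivity
  have hd := hnum.div hC hne
  rw [zero_div] at hd
  refine hd.congr' ?_
  filter_upwards [eventually_ge_atTop 1] with n hn
  have hn0 : ((2 * n : ℕ) : ℝ) ^ e ≠ 0 := by
    have h1 : (0:ℝ) < ((2*n : ℕ) : ℝ) := by exact_mod_cast Nat.pos_of_ne_zero (by omega)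
    positivity
  simp only [Pi.div_apply]
  exact aux_alg2 _ _ _ hn0

lemma aux_tendsto_Rp (e r : ℕ) (hr : r ≤ e) (he : 1 ≤ e) (a : ℝ) (ha : 0 < a) :
    Tendsto (fun n : ℕ =>
        (((n - 1).choose (e - r) * n.choose r : ℕ) : ℝ)
          * min (a * Real.log ((2 * n : ℕ) : ℝ) / (((2 * n - 1).choose e : ℕ) : ℝ)) 1
          / Real.log ((2 * n : ℕ) : ℝ)) atTop
      (nhds (a * ((e.choose r : ℝ) / 2 ^ e))) := by
  have h0 : Tendsto (fun n : ℕ =>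
      a * Real.log ((2 * n : ℕ) : ℝ) / (((2 * n - 1).choose e : ℕ) : ℝ)) atTop (nhds 0) := by
    have h := (aux_log_div_choose e he).const_mul a
    rw [mul_zero] at h
    refine h.congr (fun n => ?_)
    rw [mul_div_assoc]
  have hmin : ∀ᶠ n in atTop,
      min (a * Real.log ((2 * n : ℕ) : ℝ) / (((2 * n - 1).choose e : ℕ) : ℝ)) 1
        = a * Real.log ((2 * n : ℕ) : ℝ) / (((2 * n - 1).choose e : ℕ) : ℝ) := by
    filter_upwards [h0.eventually (gt_mem_nhds (by norm_num : (0:ℝ) < 1))] with n hn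
    exact min_eq_left hn.le
  have hratio := (aux_tendsto_ratio e r hr).const_mul a
  refine Tendsto.congr' ?_ hratio
  filter_upwards [hmin, eventually_ge_atTop (e + 1)] with n hmn hn
  have hlog : Real.log ((2 * n : ℕ) : ℝ) ≠ 0 := by
    have h2 : (2:ℝ) ≤ ((2 * n : ℕ) : ℝ) := by exact_mod_cast by omega
    exact (Real.log_pos (by linarith)).ne'
  rw [hmn, aux_alg _ _ _ _ hlog]

lemma aux_ae_le {Ω : Type} [MeasurableSpace Ω] (μ : Measure Ω)
    (Y : Ω → ℕ) (R : ℕ) (w : ℕ → ℝ)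
    (hdist : ∀ k, μ {ω | Y ω = k} = ENNReal.ofReal (w k))
    (hzero : ∀ k, R < k → w k = 0) :
    ∀ᵐ ω ∂μ, Y ω ≤ R := by
  have hnull : μ {ω | R < Y ω} = 0 := by
    have hset : {ω | R < Y ω} = ⋃ k : ℕ, {ω | Y ω = R + 1 + k} := by
      ext ω; simp only [Set.mem_setOf_eq, Set.mem_iUnion]
      constructor
      · intro h; exact ⟨Y ω - R - 1, by omega⟩
      · rintro ⟨k, hk⟩; omega
    rw [hset]
    refine measure_iUnion_null (fun k => ?_)
    rw [hdist, hzero _ (by omega), ENNReal.ofReal_zero]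
  rw [ae_iff]
  simpa [not_le] using hnull

lemma aux_pow_le (p E : ℝ) (hp0 : 0 ≤ p) (hp1 : p ≤ 1) (hE : 0 < E) (R : ℕ) :
    (1 - p + p * E) ^ R ≤ Real.exp ((R : ℝ) * (p * (E - 1))) := by
  have h1 : 0 ≤ 1 + p * (E - 1) := by nlinarith
  have h2 : 1 + p * (E - 1) ≤ Real.exp (p * (E - 1)) := by
    linarith [Real.add_one_le_exp (p * (E - 1))]
  calc (1 - p + p * E) ^ R = (1 + p * (E - 1)) ^ R := by ring_nf
    _ ≤ Real.exp (p * (E - 1)) ^ R := pow_le_pow_left₀ h1 h2 R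
    _ = Real.exp ((R : ℝ) * (p * (E - 1))) := by rw [← Real.exp_nat_mul]


/-- if I = sup_x ψ(x) > 1, then there is ε > 0 such that
N · P(D_N ≤ ε log N) → 0 along even N, where
D_N = s·Σ_m Σ_{r<d_m} (d_m−1−2r)·Y_{N,m,r} with independent binomial Y's and
s = sgn(ξ), ξ ≠ 0. -/
theorem diagonal_lower_bound_whp
    (M : ℕ) (hM : 1 ≤ M) (d : Fin M → ℕ) (hd : ∀ m, 2 ≤ d m)
    (α : Fin M → ℕ → ℝ) (hα : ∀ m r, r ≤ d m → 0 < α m r)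
    (hsym : ∀ m r, r ≤ d m → α m r = α m (d m - r))
    (ψ : ℝ → ℝ)
    (hψ : ∀ x, ψ x = ∑ m, ((2 : ℝ) ^ (d m - 1))⁻¹ * ∑ r ∈ Finset.range (d m),
      ((d m - 1).choose r : ℝ) * α m r
        * (1 - Real.exp (-(x * ((d m : ℝ) - 1 - 2 * r)))))
    (ξ : ℝ)
    (hξdef : ξ = ∑ m, ((2 : ℝ) ^ (d m - 1))⁻¹ * ∑ r ∈ Finset.range (d m),
      ((d m - 1).choose r : ℝ) * ((d m : ℝ) - 1 - 2 * r) * α m r)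
    (hξ : ξ ≠ 0) (s : ℝ) (hs : s = Real.sign ξ)
    (hI : 1 < ⨆ x : ℝ, ψ x)
    (Ω : ℕ → Type) (mΩ : ∀ N, MeasurableSpace (Ω N))
    (μ : ∀ N, Measure (Ω N)) (hprob : ∀ N, IsProbabilityMeasure (μ N))
    (Y : ∀ N, Fin M → ℕ → Ω N → ℕ)
    (hmeas : ∀ N m r, Measurable (Y N m r))
    (hdist : ∀ N : ℕ, Even N → ∀ m : Fin M, ∀ r < d m, ∀ k : ℕ,
      μ N {ω | Y N m r ω = k}
        = ENNReal.ofReal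
            ((((N / 2 - 1).choose (d m - 1 - r) * (N / 2).choose r).choose k : ℝ)
              * (min (α m r * Real.log N / (((N - 1).choose (d m - 1) : ℕ) : ℝ)) 1) ^ k
              * (1 - min (α m r * Real.log N / (((N - 1).choose (d m - 1) : ℕ) : ℝ)) 1)
                  ^ ((N / 2 - 1).choose (d m - 1 - r) * (N / 2).choose r - k)))
    (hindep : ∀ N : ℕ, Even N →
      iIndepFun
        (fun q : {q : Fin M × ℕ // q.2 < d q.1} => Y N q.1.1 q.1.2) (μ N)) :
    ∃ ε : ℝ, 0 < ε ∧
      Tendsto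
        (fun N : ℕ =>
          (N : ℝ) * (μ N {ω | s * ∑ m, ∑ r ∈ Finset.range (d m),
              ((d m : ℝ) - 1 - 2 * r) * (Y N m r ω : ℝ) ≤ ε * Real.log N}).toReal)
        (atTop ⊓ Filter.principal {N : ℕ | Even N})
        (nhds 0) := by
  classical
  -- Step 1: find x₀ with ψ x₀ > 1, and sign analysis
  have hψle : ∀ x, ψ x ≤ ξ * x := by
    intro x
    rw [hψ x, hξdef, Finset.sum_mul]
    refine Finset.sum_le_sum (fun m _ => ?_)
    rw [mul_assoc, Finset.sum_mul]
    refine mul_le_mul_of_nonneg_left (Finset.sum_le_sum (fun r hr => ?_)) (by positivity)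
    have hαr : 0 < α m r := hα m r (le_of_lt (Finset.mem_range.mp hr))
    have h1e : 1 - Real.exp (-(x * ((d m : ℝ) - 1 - 2 * r)))
        ≤ x * ((d m : ℝ) - 1 - 2 * r) := by
      linarith [Real.add_one_le_exp (-(x * ((d m : ℝ) - 1 - 2 * r)))]
    calc ((d m - 1).choose r : ℝ) * α m r * (1 - Real.exp (-(x * ((d m : ℝ) - 1 - 2 * r))))
        ≤ ((d m - 1).choose r : ℝ) * α m r * (x * ((d m : ℝ) - 1 - 2 * r)) := by
          refine mul_le_mul_of_nonneg_left h1e ?_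
          positivity
      _ = ((d m - 1).choose r : ℝ) * ((d m : ℝ) - 1 - 2 * r) * α m r * x := by ring
  obtain ⟨x₀, hx₀⟩ := exists_lt_of_lt_ciSup hI
  have hξx : 1 < ξ * x₀ := lt_of_lt_of_le hx₀ (hψle x₀)
  have hsv : (s = 1 ∧ 0 < x₀) ∨ (s = -1 ∧ x₀ < 0) := by
    rcases hξ.lt_or_gt with h | h
    · right
      refine ⟨by rw [hs, Real.sign_of_neg h], by nlinarith⟩
    · left
      refine ⟨by rw [hs, Real.sign_of_pos h], by nlinarith⟩
  have hss : s * s = 1 := by rcases hsv with ⟨h, _⟩ | ⟨h, _⟩ <;> rw [h] <;> norm_num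
  have ht : 0 < s * x₀ := by rcases hsv with ⟨h, h2⟩ | ⟨h, h2⟩ <;> rw [h] <;> nlinarith
  set t : ℝ := s * x₀ with ht_def
  set I₀ : ℝ := ψ x₀ with hI₀
  set ε : ℝ := (I₀ - 1) / (2 * t) with hε_def
  have hεpos : 0 < ε := div_pos (by linarith) (by linarith)
  have htε : t * ε = (I₀ - 1) / 2 := by
    rw [hε_def]; field_simp
  refine ⟨ε, hεpos, ?_⟩
  -- notation
  set a : Fin M → ℕ → ℝ := fun m r => ((d m : ℝ) - 1 - 2 * r) with ha_def
  set Rn : ℕ → Fin M → ℕ → ℕ :=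
    fun n m r => (n - 1).choose (d m - 1 - r) * n.choose r with hRn_def
  set pn : ℕ → Fin M → ℕ → ℝ := fun n m r =>
    min (α m r * Real.log ((2 * n : ℕ) : ℝ)
      / (((2 * n - 1).choose (d m - 1) : ℕ) : ℝ)) 1 with hpn_def
  set S : ℕ → ℝ := fun n => ∑ m, ∑ r ∈ Finset.range (d m),
    (Rn n m r : ℝ) * pn n m r * (1 - Real.exp (-(x₀ * a m r))) with hS_def
  -- Step: reduce to N = 2n
  have hle : atTop ⊓ Filter.principal {N : ℕ | Even N} ≤ Filter.map (fun n => 2 * n) atTop := by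
    intro U hU
    rw [Filter.mem_map, Filter.mem_atTop_sets] at hU
    obtain ⟨c, hc⟩ := hU
    refine Filter.mem_of_superset
      (Filter.inter_mem_inf (Filter.mem_atTop (2 * c)) (Filter.mem_principal_self _)) ?_
    rintro N ⟨hN1, hN2⟩
    obtain ⟨k, hk⟩ := hN2
    simp only [Set.mem_setOf_eq] at hN1
    have hNk : N = 2 * k := by omega
    rw [hNk]
    exact hc k (by omega)
  rw [show (fun N : ℕ =>
      (N : ℝ) * (μ N {ω | s * ∑ m, ∑ r ∈ Finset.range (d m),
          ((d m : ℝ) - 1 - 2 * r) * (Y N m r ω : ℝ) ≤ ε * Real.log N}).toReal) = (fun N : ℕ =>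
      (N : ℝ) * (μ N {ω | s * ∑ m, ∑ r ∈ Finset.range (d m),
          a m r * (Y N m r ω : ℝ) ≤ ε * Real.log N}).toReal) from rfl]
  suffices h2 : Tendsto (fun n : ℕ =>
      (((2 * n : ℕ)) : ℝ) * (μ (2 * n) {ω | s * ∑ m, ∑ r ∈ Finset.range (d m),
          a m r * (Y (2 * n) m r ω : ℝ) ≤ ε * Real.log ((2 * n : ℕ) : ℝ)}).toReal)
      atTop (nhds 0) by
    exact (Filter.tendsto_map'_iff.mpr h2).mono_left hle
  -- the two main ingredients
  have hbound : ∀ᶠ n in atTop,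
      (((2 * n : ℕ)) : ℝ) * (μ (2 * n) {ω | s * ∑ m, ∑ r ∈ Finset.range (d m),
          a m r * (Y (2 * n) m r ω : ℝ) ≤ ε * Real.log ((2 * n : ℕ) : ℝ)}).toReal
        ≤ Real.exp ((1 + t * ε) * Real.log ((2 * n : ℕ) : ℝ) - S n) := by
    filter_upwards [eventually_ge_atTop 1] with n hn
    have hNeven : Even (2 * n) := ⟨n, by ring⟩
    have hprob' := hprob (2 * n)
    have hNpos : (0:ℝ) < ((2 * n : ℕ) : ℝ) := by exact_mod_cast by omega
    have hlognn : (0:ℝ) ≤ Real.log ((2 * n : ℕ) : ℝ) :=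
      Real.log_nonneg (by exact_mod_cast by omega)
    -- distribution in convenient form
    have hdist' : ∀ (m : Fin M) (r : ℕ), r < d m → ∀ k : ℕ,
        μ (2 * n) {ω | Y (2 * n) m r ω = k} = ENNReal.ofReal
          (((Rn n m r).choose k : ℝ) * (pn n m r) ^ k
            * (1 - pn n m r) ^ (Rn n m r - k)) := by
      intro m r hr k
      have h := hdist (2 * n) hNeven m r hr k
      rw [show 2 * n / 2 = n from by omega] at h
      exact h
    have hp0 : ∀ (m : Fin M) (r : ℕ), r < d m → 0 ≤ pn n m r := by
      intro m r hr
      refine le_min ?_ zero_le_one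
      have := hα m r (by omega)
      positivity
    have hp1 : ∀ (m : Fin M) (r : ℕ), pn n m r ≤ 1 := fun m r => min_le_right _ _
    -- random vector setup
    set X : {q : Fin M × ℕ // q.2 < d q.1} → Ω (2 * n) → ℝ :=
      fun q ω => s * a q.1.1 q.1.2 * (Y (2 * n) q.1.1 q.1.2 ω : ℝ) with hX
    set T : Finset {q : Fin M × ℕ // q.2 < d q.1} :=
      (Finset.univ ×ˢ Finset.range (Finset.univ.sup d)).subtype
        (fun q : Fin M × ℕ => q.2 < d q.1) with hT
    have hXmeas : ∀ q, Measurable (X q) := fun q =>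
      (measurable_from_top.comp (hmeas (2 * n) q.1.1 q.1.2)).const_mul _
    have hXindep : iIndepFun X (μ (2 * n)) :=
      (hindep (2 * n) hNeven).comp
        (fun q (k : ℕ) => s * a q.1.1 q.1.2 * (k : ℝ)) (fun q => measurable_from_top)
    have hXsum : ∀ ω, (∑ q ∈ T, X q) ω
        = s * ∑ m, ∑ r ∈ Finset.range (d m), a m r * (Y (2 * n) m r ω : ℝ) := by
      intro ω
      rw [Finset.sum_apply, hT,
        aux_sum_T d (fun m r => s * a m r * (Y (2 * n) m r ω : ℝ)), Finset.mul_sum]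
      exact Finset.sum_congr rfl (fun m _ => by
        rw [Finset.mul_sum]
        exact Finset.sum_congr rfl (fun r _ => mul_assoc _ _ _))
    have hsetEq : {ω | s * ∑ m, ∑ r ∈ Finset.range (d m),
          a m r * (Y (2 * n) m r ω : ℝ) ≤ ε * Real.log ((2 * n : ℕ) : ℝ)}
        = {ω | (∑ q ∈ T, X q) ω ≤ ε * Real.log ((2 * n : ℕ) : ℝ)} := by
      ext ω
      simp only [Set.mem_setOf_eq, hXsum ω]
    -- per-coordinate mgf
    have hmgf_q : ∀ q ∈ T, mgf (X q) (μ (2 * n)) (-t)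
        = (1 - pn n q.1.1 q.1.2 + pn n q.1.1 q.1.2
            * Real.exp (-(x₀ * a q.1.1 q.1.2))) ^ (Rn n q.1.1 q.1.2) := by
      intro q _
      have hqlt : q.1.2 < d q.1.1 := q.2
      have hc : (fun ω => Real.exp ((-t) * X q ω))
          = fun ω => Real.exp ((-(x₀ * a q.1.1 q.1.2)) * (Y (2 * n) q.1.1 q.1.2 ω : ℝ)) := by
        funext ω
        congr 1
        rw [hX, ht_def]
        linear_combination (-(x₀ * a q.1.1 q.1.2 * (Y (2 * n) q.1.1 q.1.2 ω : ℝ))) * hss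
      rw [mgf, hc]
      exact aux_mgf_binom (μ (2 * n)) _ (hmeas _ _ _) (Rn n q.1.1 q.1.2)
        (pn n q.1.1 q.1.2) (hp0 _ _ hqlt) (hp1 _ _) (hdist' _ _ hqlt) _
    -- product bound
    have hfac_nonneg : ∀ (m : Fin M) (r : ℕ), r < d m →
        (0:ℝ) ≤ 1 - pn n m r + pn n m r * Real.exp (-(x₀ * a m r)) := by
      intro m r hr
      have h1 := hp0 m r hr
      have h2 := hp1 m r
      have h3 := (Real.exp_pos (-(x₀ * a m r))).le
      nlinarith
    have hprod_le : ∏ q ∈ T, mgf (X q) (μ (2 * n)) (-t) ≤ Real.exp (-(S n)) := by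
      calc ∏ q ∈ T, mgf (X q) (μ (2 * n)) (-t)
          = ∏ q ∈ T, (1 - pn n q.1.1 q.1.2 + pn n q.1.1 q.1.2
              * Real.exp (-(x₀ * a q.1.1 q.1.2))) ^ (Rn n q.1.1 q.1.2) :=
            Finset.prod_congr rfl hmgf_q
        _ ≤ ∏ q ∈ T, Real.exp ((Rn n q.1.1 q.1.2 : ℝ)
              * (pn n q.1.1 q.1.2 * (Real.exp (-(x₀ * a q.1.1 q.1.2)) - 1))) := by
            refine Finset.prod_le_prod (fun q _ => pow_nonneg (hfac_nonneg _ _ q.2) _)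
              (fun q _ => aux_pow_le _ _ (hp0 _ _ q.2) (hp1 _ _) (Real.exp_pos _) _)
        _ = Real.exp (∑ q ∈ T, (Rn n q.1.1 q.1.2 : ℝ)
              * (pn n q.1.1 q.1.2 * (Real.exp (-(x₀ * a q.1.1 q.1.2)) - 1))) :=
            (Real.exp_sum _ _).symm
        _ = Real.exp (-(S n)) := by
            congr 1
            rw [hT, aux_sum_T d (fun m r => (Rn n m r : ℝ)
              * (pn n m r * (Real.exp (-(x₀ * a m r)) - 1))), hS_def]
            rw [← Finset.sum_neg_distrib]
            refine Finset.sum_congr rfl (fun m _ => ?_)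
            rw [← Finset.sum_neg_distrib]
            exact Finset.sum_congr rfl (fun r _ => by ring)
    -- integrability
    have hbd : ∀ᵐ ω ∂(μ (2 * n)), ∀ q ∈ T, Y (2 * n) q.1.1 q.1.2 ω ≤ Rn n q.1.1 q.1.2 := by
      rw [Filter.eventually_all_finset]
      intro q _
      exact aux_ae_le (μ (2 * n)) _ (Rn n q.1.1 q.1.2) _ (hdist' _ _ q.2)
        (fun k hk => by
          show ((Rn n q.1.1 q.1.2).choose k : ℝ) * _ ^ k * _ ^ (Rn n q.1.1 q.1.2 - k) = 0
          rw [Nat.choose_eq_zero_of_lt hk]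
          simp)
    have hXsum_meas : Measurable (∑ q ∈ T, X q) := by
      have : (∑ q ∈ T, X q) = fun ω => ∑ q ∈ T, X q ω :=
        funext (fun ω => Finset.sum_apply _ _ _)
      rw [this]
      exact Finset.measurable_sum T (fun q _ => hXmeas q)
    set B : ℝ := ∑ q ∈ T, |s * a q.1.1 q.1.2| * (Rn n q.1.1 q.1.2 : ℝ) with hB
    have hint : Integrable (fun ω => Real.exp ((-t) * (∑ q ∈ T, X q) ω)) (μ (2 * n)) := by
      refine Integrable.mono' (integrable_const (Real.exp (|t| * B)))
        ((hXsum_meas.const_mul (-t)).exp.aestronglyMeasurable) ?_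
      filter_upwards [hbd] with ω hω
      rw [Real.norm_eq_abs, Real.abs_exp, Real.exp_le_exp]
      have h1 : |(∑ q ∈ T, X q) ω| ≤ B := by
        rw [Finset.sum_apply]
        refine (Finset.abs_sum_le_sum_abs _ _).trans (Finset.sum_le_sum (fun q hq => ?_))
        rw [hX]
        show |s * a q.1.1 q.1.2 * (Y (2 * n) q.1.1 q.1.2 ω : ℝ)| ≤ _
        rw [abs_mul, Nat.abs_cast]
        exact mul_le_mul_of_nonneg_left (by exact_mod_cast hω q hq) (abs_nonneg _)
      calc (-t) * (∑ q ∈ T, X q) ω ≤ |(-t) * (∑ q ∈ T, X q) ω| := le_abs_self _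
        _ = |t| * |(∑ q ∈ T, X q) ω| := by rw [abs_mul, abs_neg]
        _ ≤ |t| * B := mul_le_mul_of_nonneg_left h1 (abs_nonneg _)
    -- Chernoff
    have hch := measure_le_le_exp_mul_mgf (μ := μ (2 * n)) (X := ∑ q ∈ T, X q)
      (ε * Real.log ((2 * n : ℕ) : ℝ)) (by linarith : -t ≤ 0) hint
    rw [hsetEq]
    have hmgf_le : mgf (∑ q ∈ T, X q) (μ (2 * n)) (-t) ≤ Real.exp (-(S n)) := by
      rw [hXindep.mgf_sum hXmeas T]
      exact hprod_le
    calc ((2 * n : ℕ) : ℝ)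
          * ((μ (2 * n)) {ω | (∑ q ∈ T, X q) ω ≤ ε * Real.log ((2 * n : ℕ) : ℝ)}).toReal
        ≤ ((2 * n : ℕ) : ℝ) * (Real.exp (-(-t) * (ε * Real.log ((2 * n : ℕ) : ℝ)))
            * Real.exp (-(S n))) := by
          refine mul_le_mul_of_nonneg_left ?_ hNpos.le
          exact hch.trans (mul_le_mul_of_nonneg_left hmgf_le (Real.exp_pos _).le)
      _ = Real.exp ((1 + t * ε) * Real.log ((2 * n : ℕ) : ℝ) - S n) := by
          rw [show (1 + t * ε) * Real.log ((2 * n : ℕ) : ℝ) - S n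
              = Real.log ((2 * n : ℕ) : ℝ)
                + (t * (ε * Real.log ((2 * n : ℕ) : ℝ)) + -(S n)) from by ring,
            Real.exp_add, Real.exp_add, Real.exp_log hNpos, neg_neg]

  have hS : Tendsto (fun n => S n / Real.log ((2 * n : ℕ) : ℝ)) atTop (nhds I₀) := by
    have hterm : ∀ (m : Fin M), ∀ r ∈ Finset.range (d m),
        Tendsto (fun n : ℕ => (Rn n m r : ℝ) * pn n m r / Real.log ((2 * n : ℕ) : ℝ)
            * (1 - Real.exp (-(x₀ * a m r)))) atTop
          (nhds (α m r * (((d m - 1).choose r : ℝ) / 2 ^ (d m - 1))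
            * (1 - Real.exp (-(x₀ * a m r))))) := by
      intro m r hr
      have hrd := Finset.mem_range.mp hr
      have hdm := hd m
      have h1 := (aux_tendsto_Rp (d m - 1) r (by omega) (by omega)
        (α m r) (hα m r (by omega))).mul_const (1 - Real.exp (-(x₀ * a m r)))
      rw [mul_assoc] at h1
      simp only [hRn_def, hpn_def, Nat.cast_mul] at h1 ⊢
      convert h1 using 2
      · push_cast; ring
    have hsum := tendsto_finset_sum (Finset.univ : Finset (Fin M))
      (fun m (_ : m ∈ Finset.univ) => tendsto_finset_sum (Finset.range (d m))
        (fun r hr => hterm m r hr))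
    have hval : ∑ m, ∑ r ∈ Finset.range (d m),
        (α m r * (((d m - 1).choose r : ℝ) / 2 ^ (d m - 1))
          * (1 - Real.exp (-(x₀ * a m r)))) = I₀ := by
      rw [hI₀, hψ x₀]
      refine Finset.sum_congr rfl (fun m _ => ?_)
      rw [Finset.mul_sum]
      refine Finset.sum_congr rfl (fun r _ => ?_)
      simp only [ha_def]
      ring
    rw [← hval]
    refine hsum.congr (fun n => ?_)
    rw [hS_def]
    simp only [Finset.sum_div]
    exact Finset.sum_congr rfl (fun m _ => Finset.sum_congr rfl (fun r _ =>
      (mul_div_right_comm _ _ _).symm))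
  -- conclusion
  have hlogTop : Tendsto (fun n : ℕ => Real.log ((2 * n : ℕ) : ℝ)) atTop atTop :=
    Real.tendsto_log_atTop.comp (tendsto_natCast_atTop_atTop.comp aux_two_n)
  have hv : Tendsto (fun n => (1 + t * ε) - S n / Real.log ((2 * n : ℕ) : ℝ)) atTop
      (nhds ((1 + t * ε) - I₀)) := tendsto_const_nhds.sub hS
  have hneg : (1 + t * ε) - I₀ < 0 := by rw [htε]; linarith
  have hu : Tendsto (fun n => Real.log ((2 * n : ℕ) : ℝ)
      * ((1 + t * ε) - S n / Real.log ((2 * n : ℕ) : ℝ))) atTop atBot :=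
    hlogTop.atTop_mul_neg hneg hv
  have hu' : Tendsto (fun n => (1 + t * ε) * Real.log ((2 * n : ℕ) : ℝ) - S n) atTop atBot := by
    refine hu.congr' ?_
    filter_upwards [eventually_ge_atTop 1] with n hn
    have hlogpos : 0 < Real.log ((2 * n : ℕ) : ℝ) := by
      refine Real.log_pos ?_
      exact_mod_cast by omega
    rw [mul_sub, mul_comm (Real.log ((2 * n : ℕ) : ℝ)) ((1:ℝ) + t * ε)]
    congr 1
    rw [mul_comm, div_mul_cancel₀ _ hlogpos.ne']
  have hexp : Tendsto (fun n => Real.exp ((1 + t * ε) * Real.log ((2 * n : ℕ) : ℝ) - S n))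
      atTop (nhds 0) := Real.tendsto_exp_atBot.comp hu'
  refine squeeze_zero' ?_ hbound hexp
  filter_upwards with n
  positivity
end
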